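/- arXiv:1307.8185 — 7 statements merged into one kernel-verified Lean document; each statement's English description precedes it below -/
import Mathlib

section
/- Let M be an invertible real 2n×2n matrix. Assume that for every real symmetric positive definite n×n matrix X the matrix MᵀGM is symplectic, where G is the 2n×2n block diagonal matrix G = [[X, 0], [0, X⁻¹]]. Then M is either symplectic (MᵀJM = J) or antisymplectic (MᵀJM = −J). -/
open MeasureTheory Matrix

noncomputable section

/-- The standard symplectic matrix `J = [[0, I], [-I, 0]]` in `n×n` block form. -/
def stdJ (n : ℕ) : Matrix (Fin n ⊕ Fin n) (Fin n ⊕ Fin n) ℝ :=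
  Matrix.fromBlocks 0 1 (-1) 0

/-- The Wigner transform `Wψ(x,p) = (2πhbar)⁻ⁿ ∫ e^{-i p·y/hbar} ψ(x+y/2) conj(ψ(x-y/2)) dy`. -/
def wigner (hbar : ℝ) (n : ℕ) (ψ : (Fin n → ℝ) → ℂ) (x p : Fin n → ℝ) : ℂ :=
  (((2 * Real.pi * hbar)⁻¹ ^ n : ℝ) : ℂ) *
    ∫ y : Fin n → ℝ,
      Complex.exp (-(Complex.I * ((p ⬝ᵥ y : ℝ) : ℂ)) / (hbar : ℂ)) *
        ψ (x + (2 : ℝ)⁻¹ • y) * (starRingEnd ℂ) (ψ (x - (2 : ℝ)⁻¹ • y))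

/-- The Wigner transform as a function of `z = (x, p) ∈ ℝ²ⁿ`. -/
def wignerZ (hbar : ℝ) (n : ℕ) (ψ : (Fin n → ℝ) → ℂ) (z : (Fin n ⊕ Fin n) → ℝ) : ℂ :=
  wigner hbar n ψ (z ∘ Sum.inl) (z ∘ Sum.inr)

/-- The cross-Wigner transform `W(ψ,φ)`. -/
def crossWigner (hbar : ℝ) (n : ℕ) (ψ φ : (Fin n → ℝ) → ℂ) (x p : Fin n → ℝ) : ℂ :=
  (((2 * Real.pi * hbar)⁻¹ ^ n : ℝ) : ℂ) *
    ∫ y : Fin n → ℝ,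
      Complex.exp (-(Complex.I * ((p ⬝ᵥ y : ℝ) : ℂ)) / (hbar : ℂ)) *
        ψ (x + (2 : ℝ)⁻¹ • y) * (starRingEnd ℂ) (φ (x - (2 : ℝ)⁻¹ • y))

/-- The cross-Wigner transform as a function of `z = (x, p) ∈ ℝ²ⁿ`. -/
def crossWignerZ (hbar : ℝ) (n : ℕ) (ψ φ : (Fin n → ℝ) → ℂ) (z : (Fin n ⊕ Fin n) → ℝ) : ℂ :=
  crossWigner hbar n ψ φ (z ∘ Sum.inl) (z ∘ Sum.inr)

/-- The Gaussian `ψ_X(x) = (πhbar)^{-n/4} (det X)^{1/4} e^{-X x·x/(2hbar)}`. -/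
def gauss (hbar : ℝ) (n : ℕ) (X : Matrix (Fin n) (Fin n) ℝ) (x : Fin n → ℝ) : ℂ :=
  (((Real.pi * hbar) ^ (-(n : ℝ) / 4) * X.det ^ ((1 : ℝ) / 4) : ℝ) : ℂ) *
    Complex.exp (-((X.mulVec x ⬝ᵥ x : ℝ) : ℂ) / (2 * (hbar : ℂ)))

/-- The complex Gaussian `ψ_{X,Y}(x) = (πhbar)^{-n/4} (det X)^{1/4} e^{-(X+iY) x·x/(2hbar)}`. -/
def gaussXY (hbar : ℝ) (n : ℕ) (X Y : Matrix (Fin n) (Fin n) ℝ) (x : Fin n → ℝ) : ℂ :=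
  (((Real.pi * hbar) ^ (-(n : ℝ) / 4) * X.det ^ ((1 : ℝ) / 4) : ℝ) : ℂ) *
    Complex.exp (-(((X.mulVec x ⬝ᵥ x : ℝ) : ℂ) + Complex.I * ((Y.mulVec x ⬝ᵥ x : ℝ) : ℂ)) /
      (2 * (hbar : ℂ)))

/-- The kernel `K_a(x,y) = (2πhbar)⁻ⁿ ∫ e^{i p·(x-y)/hbar} a((x+y)/2, p) dp` of the Weyl operator. -/
def weylKernel (hbar : ℝ) (n : ℕ) (a : ((Fin n ⊕ Fin n) → ℝ) → ℂ) (x y : Fin n → ℝ) : ℂ :=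
  (((2 * Real.pi * hbar)⁻¹ ^ n : ℝ) : ℂ) *
    ∫ p : Fin n → ℝ,
      Complex.exp (Complex.I * ((p ⬝ᵥ (x - y) : ℝ) : ℂ) / (hbar : ℂ)) *
        a (Sum.elim ((2 : ℝ)⁻¹ • (x + y)) p)

/-- The Weyl operator `Â_a` with symbol `a`, acting on a function `φ` on `ℝⁿ`. -/
def weyl (hbar : ℝ) (n : ℕ) (a : ((Fin n ⊕ Fin n) → ℝ) → ℂ) (φ : (Fin n → ℝ) → ℂ)
    (x : Fin n → ℝ) : ℂ :=
  ∫ y : Fin n → ℝ, weylKernel hbar n a x y * φ y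

/-- A symplectic ball: the image of a closed Euclidean ball `B²ⁿ(r)` centered at the origin
under a linear symplectic automorphism. -/
def IsSymplecticBall (n : ℕ) (B : Set (EuclideanSpace ℝ (Fin n ⊕ Fin n))) : Prop :=
  ∃ (S : Matrix (Fin n ⊕ Fin n) (Fin n ⊕ Fin n) ℝ) (r : ℝ), 0 < r ∧
    Sᵀ * stdJ n * S = stdJ n ∧
    B = (fun z : EuclideanSpace ℝ (Fin n ⊕ Fin n) =>
      (WithLp.toLp 2 (S.mulVec z) : EuclideanSpace ℝ (Fin n ⊕ Fin n))) '' Metric.closedBall 0 r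


section AuxMaxCov

private lemma auxMC_isHermitian_of_isSymm {m : ℕ} {A : Matrix (Fin m) (Fin m) ℝ}
    (h : A.IsSymm) : A.IsHermitian := by
  ext i j
  rw [Matrix.conjTranspose_apply, star_trivial]
  exact h.apply i j

private lemma auxMC_dotProduct_self_pos {m : ℕ} {x : Fin m → ℝ} (hx : x ≠ 0) :
    0 < x ⬝ᵥ x := by
  classical
  obtain ⟨k, hk⟩ := Function.ne_iff.mp hx
  refine Finset.sum_pos' (fun i _ => mul_self_nonneg _) ⟨k, Finset.mem_univ k, ?_⟩
  exact mul_self_pos.mpr hk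

private lemma auxMC_quad {m : ℕ} (i j : Fin m) (x : Fin m → ℝ) :
    x ⬝ᵥ (Matrix.single i j (1:ℝ)) *ᵥ x = x i * x j := by
  rw [Matrix.single_mulVec]
  classical
  simp [dotProduct, Function.update_apply, Finset.sum_ite_eq', mul_comm]

private lemma auxMC_transpose_std {m : ℕ} (i j : Fin m) :
    (Matrix.single i j (1:ℝ))ᵀ = Matrix.single j i 1 := by
  ext a b
  simp [Matrix.single, and_comm]

/-- A real matrix commuting with all symmetric positive definite matrices is scalar. -/
private lemma auxMC_comm_scalar {m : ℕ} (A : Matrix (Fin m) (Fin m) ℝ)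
    (hA : ∀ X : Matrix (Fin m) (Fin m) ℝ, X.IsSymm → X.PosDef → X * A = A * X) :
    ∃ c : ℝ, A = c • (1 : Matrix (Fin m) (Fin m) ℝ) := by
  classical
  rcases Nat.eq_zero_or_pos m with hm | hm
  · refine ⟨0, ?_⟩
    ext i j
    exact absurd i.2 (by omega)
  have hdiag : ∀ i : Fin m,
      Matrix.single i i (1:ℝ) * A = A * Matrix.single i i (1:ℝ) := by
    intro i
    have hs : (1 + Matrix.single i i (1:ℝ)).IsSymm := by
      rw [Matrix.IsSymm, Matrix.transpose_add, Matrix.transpose_one, auxMC_transpose_std]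
    have hp : (1 + Matrix.single i i (1:ℝ)).PosDef := by
      refine Matrix.PosDef.of_dotProduct_mulVec_pos (auxMC_isHermitian_of_isSymm hs) fun x hx => ?_
      have h1 : 0 < x ⬝ᵥ x := auxMC_dotProduct_self_pos hx
      have h2 := mul_self_nonneg (x i)
      simp only [star_trivial, Matrix.add_mulVec, Matrix.one_mulVec, dotProduct_add,
        auxMC_quad]
      linarith
    have h3 := hA _ hs hp
    rw [add_mul, one_mul, mul_add, mul_one] at h3
    exact add_left_cancel h3
  have hoff : ∀ i j : Fin m, i ≠ j →
      (Matrix.single i j (1:ℝ) + Matrix.single j i 1) * A =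
        A * (Matrix.single i j (1:ℝ) + Matrix.single j i 1) := by
    intro i j hij
    set S := Matrix.single i j (1:ℝ) + Matrix.single j i 1 with hS
    have hs : (1 + (2⁻¹:ℝ) • S).IsSymm := by
      rw [Matrix.IsSymm, Matrix.transpose_add, Matrix.transpose_one, Matrix.transpose_smul,
        hS, Matrix.transpose_add, auxMC_transpose_std, auxMC_transpose_std,
        add_comm (Matrix.single j i (1:ℝ))]
    have hp : (1 + (2⁻¹:ℝ) • S).PosDef := by
      refine Matrix.PosDef.of_dotProduct_mulVec_pos (auxMC_isHermitian_of_isSymm hs) fun x hx => ?_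
      have h1 : 0 < x ⬝ᵥ x := auxMC_dotProduct_self_pos hx
      have hle : x i * x i + x j * x j ≤ x ⬝ᵥ x := by
        calc x i * x i + x j * x j = ∑ k ∈ ({i, j} : Finset (Fin m)), x k * x k := by
              rw [Finset.sum_pair hij]
          _ ≤ ∑ k, x k * x k :=
              Finset.sum_le_sum_of_subset_of_nonneg (Finset.subset_univ _)
                (fun k _ _ => mul_self_nonneg _)
          _ = x ⬝ᵥ x := rfl
      have hsq := sq_nonneg (x i + x j)
      simp only [star_trivial, Matrix.add_mulVec, Matrix.one_mulVec, dotProduct_add,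
        Matrix.smul_mulVec, dotProduct_smul, hS, auxMC_quad, smul_eq_mul]
      nlinarith
    have h3 := hA _ hs hp
    rw [add_mul, one_mul, mul_add, mul_one, smul_mul_assoc, mul_smul_comm] at h3
    have h4 := add_left_cancel h3
    exact smul_right_injective _ (by norm_num : (2⁻¹:ℝ) ≠ 0) h4
  have hzero : ∀ i j : Fin m, i ≠ j → A i j = 0 := by
    intro i j hij
    have h2 := congrFun (congrFun (hdiag i) i) j
    rw [Matrix.single_mul_apply_same,
      Matrix.mul_single_apply_of_ne _ _ _ _ _ (Ne.symm hij)] at h2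
    simpa using h2
  have hdeq : ∀ i j : Fin m, A i i = A j j := by
    intro i j
    rcases eq_or_ne i j with rfl | hij
    · rfl
    have h2 := congrFun (congrFun (hoff i j hij) i) j
    rw [Matrix.add_mul, Matrix.mul_add, Matrix.add_apply, Matrix.add_apply,
      Matrix.single_mul_apply_same,
      Matrix.single_mul_apply_of_ne _ _ _ _ _ hij,
      Matrix.mul_single_apply_same,
      Matrix.mul_single_apply_of_ne _ _ _ _ _ hij.symm] at h2
    simpa using h2.symm
  refine ⟨A ⟨0, hm⟩ ⟨0, hm⟩, ?_⟩
  ext i j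
  rcases eq_or_ne i j with rfl | hij
  · simp [Matrix.one_apply, hdeq i ⟨0, hm⟩]
  · simp [Matrix.one_apply, hij, hzero i j hij]

end AuxMaxCov

/-- If `MᵀGM` is symplectic for every `G = [[X,0],[0,X⁻¹]]` with `X` symmetric
positive definite, then `M` is symplectic or antisymplectic. -/
theorem maximal_covariance_lemma (n : ℕ) (M : Matrix (Fin n ⊕ Fin n) (Fin n ⊕ Fin n) ℝ)
    (hM : IsUnit M.det)
    (h : ∀ X : Matrix (Fin n) (Fin n) ℝ, X.IsSymm → X.PosDef →
      (Mᵀ * Matrix.fromBlocks X 0 0 X⁻¹ * M)ᵀ * stdJ n *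
        (Mᵀ * Matrix.fromBlocks X 0 0 X⁻¹ * M) = stdJ n) :
    Mᵀ * stdJ n * M = stdJ n ∨ Mᵀ * stdJ n * M = -stdJ n := by
  classical
  rcases Nat.eq_zero_or_pos n with hn | hn
  · left
    subst hn
    ext i j
    rcases i with i | i <;> exact absurd i.2 (by omega)
  have i0 : Fin n := ⟨0, hn⟩
  haveI := M.invertibleOfIsUnitDet hM
  haveI := Matrix.invertibleTranspose M
  set J := stdJ n with hJdef
  have hJT : Jᵀ = -J := by
    rw [hJdef, stdJ, Matrix.fromBlocks_transpose]
    rw [show -Matrix.fromBlocks (0 : Matrix (Fin n) (Fin n) ℝ) 1 (-1) 0 =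
      Matrix.fromBlocks (-0) (-1) (-(-1)) (-0) from (Matrix.fromBlocks_neg _ _ _ _)]
    simp
  have hJ1 : J * J = -1 := by
    rw [hJdef, stdJ, Matrix.fromBlocks_multiply]
    rw [show (-1 : Matrix (Fin n ⊕ Fin n) (Fin n ⊕ Fin n) ℝ) =
      -Matrix.fromBlocks 1 0 0 1 from by rw [Matrix.fromBlocks_one]]
    rw [show -Matrix.fromBlocks (1 : Matrix (Fin n) (Fin n) ℝ) 0 0 1 =
      Matrix.fromBlocks (-1) (-0) (-0) (-1) from (Matrix.fromBlocks_neg _ _ _ _)]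
    simp
  have hJ2 : ∀ X : Matrix (Fin n ⊕ Fin n) (Fin n ⊕ Fin n) ℝ, J * (J * X) = -X := by
    intro X
    rw [← Matrix.mul_assoc, hJ1, Matrix.neg_mul, Matrix.one_mul]
  have hcancel : ∀ A B : Matrix (Fin n ⊕ Fin n) (Fin n ⊕ Fin n) ℝ,
      Mᵀ * A * M = Mᵀ * B * M → A = B := by
    intro A B hAB
    have h2 := congrArg (fun Z => (Mᵀ)⁻¹ * Z * M⁻¹) hAB
    simpa only [Matrix.mul_assoc, Matrix.mul_inv_of_invertible, Matrix.mul_one,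
      Matrix.inv_mul_cancel_left_of_invertible] using h2
  set C := M * J * Mᵀ with hCdef
  have h1 : Mᵀ * C * M = J := by
    have h2 := h 1 Matrix.isSymm_one Matrix.PosDef.one
    have hinv1 : (1 : Matrix (Fin n) (Fin n) ℝ)⁻¹ = 1 :=
      Matrix.inv_eq_right_inv (by rw [Matrix.one_mul])
    rw [hinv1, Matrix.fromBlocks_one, Matrix.mul_one, Matrix.transpose_mul,
      Matrix.transpose_transpose] at h2
    rw [hCdef]
    simp only [Matrix.mul_assoc] at h2 ⊢
    exact h2
  have hGC : ∀ X : Matrix (Fin n) (Fin n) ℝ, X.IsSymm → X.PosDef →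
      (Matrix.fromBlocks X 0 0 X⁻¹) * C * (Matrix.fromBlocks X 0 0 X⁻¹) = C := by
    intro X hs hp
    have hXinvT : (X⁻¹)ᵀ = X⁻¹ := by rw [Matrix.transpose_nonsing_inv, hs]
    have hGsymm : (Matrix.fromBlocks X 0 0 X⁻¹)ᵀ = Matrix.fromBlocks X 0 0 X⁻¹ := by
      rw [Matrix.fromBlocks_transpose, hXinvT, hs]
      simp
    have h2 := h X hs hp
    rw [Matrix.transpose_mul, Matrix.transpose_mul, Matrix.transpose_transpose, hGsymm] at h2
    apply hcancel
    rw [h1, hCdef]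
    simp only [Matrix.mul_assoc] at h2 ⊢
    exact h2
  set A := C.toBlocks₁₁ with hA
  set B := C.toBlocks₁₂ with hB
  set C2 := C.toBlocks₂₁ with hC2
  set D := C.toBlocks₂₂ with hD
  have hCb : C = Matrix.fromBlocks A B C2 D := (Matrix.fromBlocks_toBlocks C).symm
  have hblocks : ∀ X : Matrix (Fin n) (Fin n) ℝ, X.IsSymm → X.PosDef →
      Matrix.fromBlocks (X * A * X) (X * B * X⁻¹) (X⁻¹ * C2 * X) (X⁻¹ * D * X⁻¹) =
        Matrix.fromBlocks A B C2 D := by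
    intro X hs hp
    have h2 := hGC X hs hp
    rw [hCb] at h2
    rw [Matrix.fromBlocks_multiply, Matrix.fromBlocks_multiply] at h2
    simpa using h2
  have h2symm : ((2:ℝ) • (1 : Matrix (Fin n) (Fin n) ℝ)).IsSymm := by
    rw [Matrix.IsSymm, Matrix.transpose_smul, Matrix.transpose_one]
  have h2pos : ((2:ℝ) • (1 : Matrix (Fin n) (Fin n) ℝ)).PosDef := by
    refine Matrix.PosDef.of_dotProduct_mulVec_pos (auxMC_isHermitian_of_isSymm h2symm) fun x hx => ?_
    have h1 := auxMC_dotProduct_self_pos hx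
    simp only [star_trivial, Matrix.smul_mulVec, Matrix.one_mulVec, dotProduct_smul,
      smul_eq_mul]
    linarith
  have h2inv : ((2:ℝ) • (1 : Matrix (Fin n) (Fin n) ℝ))⁻¹ = (2⁻¹:ℝ) • 1 := by
    apply Matrix.inv_eq_right_inv
    simp only [smul_mul_assoc, mul_smul_comm, smul_smul, Matrix.one_mul]
    norm_num
  have hb2 := hblocks _ h2symm h2pos
  rw [h2inv] at hb2
  have hA0 : A = 0 := by
    have h2 := congrArg Matrix.toBlocks₁₁ hb2
    rw [Matrix.toBlocks_fromBlocks₁₁, Matrix.toBlocks_fromBlocks₁₁] at h2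
    simp only [smul_mul_assoc, mul_smul_comm, smul_smul, Matrix.one_mul, Matrix.mul_one] at h2
    have h3 : ((2:ℝ) * 2 - 1) • A = 0 := by
      rw [sub_smul, one_smul, h2, sub_self]
    have h4 : ((2:ℝ) * 2 - 1) ≠ 0 := by norm_num
    rcases smul_eq_zero.mp h3 with h5 | h5
    · exact absurd h5 h4
    · exact h5
  have hD0 : D = 0 := by
    have h2 := congrArg Matrix.toBlocks₂₂ hb2
    rw [Matrix.toBlocks_fromBlocks₂₂, Matrix.toBlocks_fromBlocks₂₂] at h2
    simp only [smul_mul_assoc, mul_smul_comm, smul_smul, Matrix.one_mul, Matrix.mul_one] at h2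
    have h3 : ((2⁻¹:ℝ) * 2⁻¹ - 1) • D = 0 := by
      rw [sub_smul, one_smul, h2, sub_self]
    have h4 : ((2⁻¹:ℝ) * 2⁻¹ - 1) ≠ 0 := by norm_num
    rcases smul_eq_zero.mp h3 with h5 | h5
    · exact absurd h5 h4
    · exact h5
  have hBcomm : ∀ X : Matrix (Fin n) (Fin n) ℝ, X.IsSymm → X.PosDef → X * B = B * X := by
    intro X hs hp
    have h2 := congrArg Matrix.toBlocks₁₂ (hblocks X hs hp)
    rw [Matrix.toBlocks_fromBlocks₁₂, Matrix.toBlocks_fromBlocks₁₂] at h2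
    have h3 := congrArg (fun Z => Z * X) h2
    simpa only [Matrix.mul_assoc, Matrix.nonsing_inv_mul X hp.det_pos.ne'.isUnit,
      Matrix.mul_one] using h3
  have hC2comm : ∀ X : Matrix (Fin n) (Fin n) ℝ, X.IsSymm → X.PosDef →
      X * C2 = C2 * X := by
    intro X hs hp
    have h2 := congrArg Matrix.toBlocks₂₁ (hblocks X hs hp)
    rw [Matrix.toBlocks_fromBlocks₂₁, Matrix.toBlocks_fromBlocks₂₁] at h2
    have h3 := congrArg (fun Z => X * Z) h2
    simp only [← Matrix.mul_assoc, Matrix.mul_nonsing_inv X hp.det_pos.ne'.isUnit,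
      Matrix.one_mul] at h3
    exact h3.symm
  obtain ⟨b, hbval⟩ := auxMC_comm_scalar B hBcomm
  obtain ⟨c, hcval⟩ := auxMC_comm_scalar C2 hC2comm
  have hCT : Cᵀ = -C := by
    rw [hCdef, Matrix.transpose_mul, Matrix.transpose_mul, Matrix.transpose_transpose, hJT]
    rw [Matrix.neg_mul, Matrix.mul_neg, Matrix.mul_assoc]
  have hcb : c = -b := by
    have h2 : (Matrix.fromBlocks A B C2 D)ᵀ = -(Matrix.fromBlocks A B C2 D) := by
      rw [← hCb]; exact hCT
    rw [Matrix.fromBlocks_transpose] at h2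
    rw [show -Matrix.fromBlocks A B C2 D = Matrix.fromBlocks (-A) (-B) (-C2) (-D) from
      (Matrix.fromBlocks_neg _ _ _ _)] at h2
    have h3 := congrArg Matrix.toBlocks₁₂ h2
    rw [Matrix.toBlocks_fromBlocks₁₂, Matrix.toBlocks_fromBlocks₁₂] at h3
    rw [hbval, hcval] at h3
    have h4 := congrFun (congrFun h3 i0) i0
    simpa [Matrix.transpose_smul, Matrix.one_apply] using h4
  have hCJ : C = b • J := by
    rw [hCb, hA0, hD0, hbval, hcval, hcb, hJdef, stdJ, Matrix.fromBlocks_smul]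
    simp [neg_smul]
  have hA' : b • (Mᵀ * J * M) = J := by
    have h2 : Mᵀ * (b • J) * M = J := by rw [← hCJ]; exact h1
    rw [Matrix.mul_smul, Matrix.smul_mul] at h2
    exact h2
  have hB' : M * J * Mᵀ = b • J := by rw [← hCdef]; exact hCJ
  set N := Mᵀ * J * M with hNdef
  have hNJN : N * J * N = -J := by
    calc N * J * N = Mᵀ * J * ((M * J * Mᵀ) * (J * M)) := by
          rw [hNdef]; simp only [Matrix.mul_assoc]
      _ = Mᵀ * J * ((b • J) * (J * M)) := by rw [hB']
      _ = b • (Mᵀ * (J * (J * (J * M)))) := by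
          simp only [Matrix.smul_mul, Matrix.mul_smul, Matrix.mul_assoc]
      _ = b • (Mᵀ * -(J * M)) := by rw [hJ2 (J * M)]
      _ = -(b • (Mᵀ * J * M)) := by
          simp only [Matrix.mul_neg, smul_neg, Matrix.mul_assoc]
      _ = -J := by rw [← hNdef, hA']
  have hbb : (b * b) • J = J := by
    have h2 : (b • N) * J * (b • N) = -J := by
      rw [hA', hJ1, Matrix.neg_mul, Matrix.one_mul]
    rw [Matrix.smul_mul, Matrix.mul_smul, Matrix.smul_mul, smul_smul, hNJN, smul_neg] at h2
    exact neg_injective h2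
  have hb1 : b * b = 1 := by
    have h2 := congrFun (congrFun hbb (Sum.inl i0)) (Sum.inr i0)
    rw [Matrix.smul_apply] at h2
    rw [hJdef] at h2
    simpa [stdJ, Matrix.one_apply] using h2
  rcases mul_self_eq_one_iff.mp hb1 with hb | hb
  · left
    rw [hb, one_smul] at hA'
    exact hA'
  · right
    rw [hb] at hA'
    rw [← hA', neg_smul, one_smul, neg_neg]


end
end

section
/- Let X be a real symmetric positive definite n×n matrix and let ψ_X be the Gaussian ψ_X(x) = (πħ)^{−n/4} (det X)^{1/4} e^{−(X x·x)/(2ħ)}. Then for all (x, p) ∈ ℝ²ⁿ, Wψ_X(x, p) = (πħ)⁻ⁿ e^{−(X x·x + X⁻¹ p·p)/ħ}; equivalently Wψ_X(z) = (πħ)⁻ⁿ e^{−(G z·z)/ħ} where G is the block diagonal matrix [[X, 0], [0, X⁻¹]]. -/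
open MeasureTheory Matrix

noncomputable section

lemma dot_twist {n : ℕ} (A Q : Matrix (Fin n) (Fin n) ℝ) (v : Fin n → ℝ) :
    (Qᵀ * A * Q).mulVec v ⬝ᵥ v = A.mulVec (Q.mulVec v) ⬝ᵥ (Q.mulVec v) := by
  rw [← Matrix.mulVec_mulVec, ← Matrix.mulVec_mulVec, Matrix.mulVec_transpose,
    ← Matrix.dotProduct_mulVec]

lemma key_integral (hbar : ℝ) (hhbar : 0 < hbar) (n : ℕ)
    (X : Matrix (Fin n) (Fin n) ℝ) (hX : X.PosDef) (p : Fin n → ℝ) :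
    ∫ y : Fin n → ℝ,
        Complex.exp (-(Complex.I * ((p ⬝ᵥ y : ℝ) : ℂ)) / (hbar : ℂ)
          - ((X.mulVec y ⬝ᵥ y : ℝ) : ℂ) / (4 * (hbar : ℂ)))
      = (((4 * Real.pi * hbar) ^ ((n : ℝ) / 2) / X.det ^ ((1 : ℝ) / 2) : ℝ) : ℂ) *
        Complex.exp (-((X⁻¹.mulVec p ⬝ᵥ p : ℝ) : ℂ) / (hbar : ℂ)) := by
  classical
  have hH : X.IsHermitian := hX.1
  set d : Fin n → ℝ := hH.eigenvalues with hd
  have hdpos : ∀ i, 0 < d i := fun i => hX.eigenvalues_pos i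
  set Q : Matrix (Fin n) (Fin n) ℝ := (hH.eigenvectorUnitary : Matrix (Fin n) (Fin n) ℝ) with hQdef
  have hstar : star Q = Qᵀ := by
    rw [Matrix.star_eq_conjTranspose, Matrix.conjTranspose_eq_transpose_of_trivial]
  have hQmem : Q ∈ Matrix.unitaryGroup (Fin n) ℝ := hH.eigenvectorUnitary.2
  have hQtQ : Qᵀ * Q = 1 := by
    rw [← hstar]; exact (Matrix.mem_unitaryGroup_iff'.mp hQmem)
  have hQQt : Q * Qᵀ = 1 := by
    rw [← hstar]; exact (Matrix.mem_unitaryGroup_iff.mp hQmem)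
  have hdetQ : Q.det = 1 ∨ Q.det = -1 := by
    have h1 : Q.det * Q.det = 1 := by
      have := congrArg Matrix.det hQtQ
      rwa [Matrix.det_mul, Matrix.det_transpose, Matrix.det_one] at this
    rcases mul_self_eq_one_iff.mp h1 with h | h
    · exact Or.inl h
    · exact Or.inr h
  have hdetQne : Q.det ≠ 0 := by rcases hdetQ with h | h <;> rw [h] <;> norm_num
  have hdiag : Qᵀ * X * Q = Matrix.diagonal d := by
    have := hH.conjStarAlgAut_star_eigenvectorUnitary
    rw [Unitary.conjStarAlgAut_star_apply] at this
    rwa [hstar] at this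
  set q : Fin n → ℝ := Qᵀ.mulVec p with hq
  have hdot1 : ∀ v : Fin n → ℝ, p ⬝ᵥ Q.mulVec v = ∑ i, q i * v i := by
    intro v
    rw [Matrix.dotProduct_mulVec, hq, Matrix.mulVec_transpose]
    rfl
  have hdot2 : ∀ v : Fin n → ℝ, X.mulVec (Q.mulVec v) ⬝ᵥ (Q.mulVec v) = ∑ i, d i * (v i * v i) := by
    intro v
    rw [← dot_twist, hdiag]
    simp [Matrix.mulVec_diagonal, dotProduct, mul_assoc]
  have hXeq : X = Q * Matrix.diagonal d * Qᵀ := by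
    have h2 : Q * (Qᵀ * X * Q) * Qᵀ = X := by
      simp only [← Matrix.mul_assoc]
      rw [hQQt, Matrix.one_mul, Matrix.mul_assoc, hQQt, Matrix.mul_one]
    rw [← h2, hdiag]
  have hXinv : X⁻¹ = Q * Matrix.diagonal (fun i => (d i)⁻¹) * Qᵀ := by
    apply Matrix.inv_eq_left_inv
    rw [hXeq]
    calc Q * Matrix.diagonal (fun i => (d i)⁻¹) * Qᵀ * (Q * Matrix.diagonal d * Qᵀ)
        = Q * Matrix.diagonal (fun i => (d i)⁻¹) * (Qᵀ * Q) * Matrix.diagonal d * Qᵀ := by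
          simp only [Matrix.mul_assoc]
      _ = Q * (Matrix.diagonal (fun i => (d i)⁻¹) * Matrix.diagonal d) * Qᵀ := by
          rw [hQtQ]; simp only [Matrix.mul_one, Matrix.mul_assoc]
      _ = 1 := by
          rw [Matrix.diagonal_mul_diagonal]
          have : (fun i => (d i)⁻¹ * d i) = fun _ => (1:ℝ) := by
            funext i; exact inv_mul_cancel₀ (hdpos i).ne'
          rw [this, Matrix.diagonal_one, Matrix.mul_one, hQQt]
  have hXinvp : X⁻¹.mulVec p ⬝ᵥ p = ∑ i, (d i)⁻¹ * (q i * q i) := by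
    have h3 := dot_twist (Matrix.diagonal fun i => (d i)⁻¹) Qᵀ p
    rw [Matrix.transpose_transpose] at h3
    rw [hXinv, h3]
    simp [Matrix.mulVec_diagonal, dotProduct, hq, mul_assoc]
  have hdet : X.det = ∏ i, d i := by
    rw [hXeq, Matrix.det_mul, Matrix.det_mul, Matrix.det_diagonal, Matrix.det_transpose]
    have h1 : Q.det * Q.det = 1 := by
      have := congrArg Matrix.det hQtQ
      rwa [Matrix.det_mul, Matrix.det_transpose, Matrix.det_one] at this
    nlinarith [Finset.prod_pos (fun i (_ : i ∈ Finset.univ) => hdpos i)]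
  -- measure preserving change of variables
  have hmp : MeasurePreserving (fun v : Fin n → ℝ => Q.mulVec v) volume volume := by
    refine ⟨(Matrix.toLin' Q).continuous_of_finiteDimensional.measurable, ?_⟩
    have h1 := Real.map_matrix_volume_pi_eq_smul_volume_pi (M := Q) hdetQne
    have habs : |Q.det| = 1 := by rcases hdetQ with h | h <;> rw [h] <;> norm_num
    have h2 : Measure.map (Matrix.toLin' Q) volume = volume := by
      rw [h1, abs_inv, habs]; simp
    have h3 : (fun v : Fin n → ℝ => Q.mulVec v) = ⇑(Matrix.toLin' Q) :=
      funext fun v => (Matrix.toLin'_apply Q v).symm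
    rw [h3]; exact h2
  have hinv : Invertible Q := Q.invertibleOfIsUnitDet (isUnit_iff_ne_zero.mpr hdetQne)
  let e : (Fin n → ℝ) ≃ₗ[ℝ] (Fin n → ℝ) := Q.toLinearEquiv' hinv
  have hemb : MeasurableEmbedding (fun v : Fin n → ℝ => Q.mulVec v) := by
    have he : (fun v : Fin n → ℝ => Q.mulVec v)
        = (e.toContinuousLinearEquiv.toHomeomorph : (Fin n → ℝ) ≃ₜ (Fin n → ℝ)) := by
      ext v i; rfl
    rw [he]
    exact (e.toContinuousLinearEquiv.toHomeomorph).measurableEmbedding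
  rw [← hmp.integral_comp hemb]
  have hbne : (hbar : ℂ) ≠ 0 := Complex.ofReal_ne_zero.mpr hhbar.ne'
  -- rewrite exponent
  have hpt : ∀ v : Fin n → ℝ,
      (-(Complex.I * ((p ⬝ᵥ Q.mulVec v : ℝ) : ℂ)) / (hbar : ℂ)
        - ((X.mulVec (Q.mulVec v) ⬝ᵥ (Q.mulVec v) : ℝ) : ℂ) / (4 * (hbar : ℂ)))
      = -∑ i, (((d i : ℝ) : ℂ) / (4 * (hbar : ℂ))) * (v i : ℂ) ^ 2
        + ∑ i, (-(Complex.I * ((q i : ℝ) : ℂ)) / (hbar : ℂ)) * (v i : ℂ) := by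
    intro v
    rw [hdot1 v, hdot2 v]
    push_cast
    simp only [Finset.mul_sum, neg_div, Finset.sum_div, ← Finset.sum_neg_distrib]
    rw [← Finset.sum_sub_distrib, ← Finset.sum_add_distrib]
    apply Finset.sum_congr rfl
    intro i _
    field_simp
    ring
  simp_rw [hpt]
  have hb : ∀ i, 0 < (((d i : ℝ) : ℂ) / (4 * (hbar : ℂ))).re := by
    intro i
    rw [show ((d i : ℝ) : ℂ) / (4 * (hbar : ℂ)) = ((d i / (4 * hbar) : ℝ) : ℂ) by push_cast; ring,
      Complex.ofReal_re]
    exact div_pos (hdpos i) (by positivity)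
  rw [GaussianFourier.integral_cexp_neg_sum_mul_add hb]
  -- evaluate the RHS product
  have hfac : ∀ i : Fin n,
      ((Real.pi : ℂ) / (((d i : ℝ) : ℂ) / (4 * (hbar : ℂ)))) ^ (1/2 : ℂ)
        * Complex.exp ((-(Complex.I * ((q i : ℝ) : ℂ)) / (hbar : ℂ)) ^ 2
            / (4 * (((d i : ℝ) : ℂ) / (4 * (hbar : ℂ)))))
      = (((4 * Real.pi * hbar / d i) ^ ((1:ℝ)/2) : ℝ) : ℂ)
        * Complex.exp (((-(q i ^ 2) / (hbar * d i) : ℝ) : ℂ)) := by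
    intro i
    have hdne : ((d i : ℝ) : ℂ) ≠ 0 := Complex.ofReal_ne_zero.mpr (hdpos i).ne'
    congr 1
    · rw [show ((Real.pi : ℂ) / (((d i : ℝ) : ℂ) / (4 * (hbar : ℂ))))
          = ((4 * Real.pi * hbar / d i : ℝ) : ℂ) by push_cast; field_simp]
      rw [Complex.ofReal_cpow (le_of_lt (div_pos (by positivity) (hdpos i)))]
      norm_num
    · congr 1
      push_cast
      field_simp
      ring_nf
      rw [Complex.I_sq]
      ring
  simp_rw [hfac]
  rw [Finset.prod_mul_distrib, ← Complex.exp_sum, ← Complex.ofReal_prod, ← Complex.ofReal_sum]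
  congr 2
  · -- product of constants
    rw [Real.finset_prod_rpow _ _ (fun i _ => le_of_lt (div_pos (by positivity) (hdpos i))) _]
    rw [Finset.prod_div_distrib, Finset.prod_const, Finset.card_univ, Fintype.card_fin, ← hdet]
    rw [Real.div_rpow (by positivity) (hX.det_pos.le)]
    congr 1
    rw [← Real.rpow_natCast (4 * Real.pi * hbar) n, ← Real.rpow_mul (by positivity)]
    congr 1
    ring
  · -- sum of exponents
    have hdne : ∀ i, ((d i : ℝ) : ℂ) ≠ 0 := fun i => Complex.ofReal_ne_zero.mpr (hdpos i).ne'
    rw [hXinvp]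
    push_cast
    rw [neg_div, Finset.sum_div, ← Finset.sum_neg_distrib]
    apply Finset.sum_congr rfl
    intro i _
    field_simp

lemma quad_split {n : ℕ} (X : Matrix (Fin n) (Fin n) ℝ) (x y : Fin n → ℝ) :
    X.mulVec (x + (2:ℝ)⁻¹ • y) ⬝ᵥ (x + (2:ℝ)⁻¹ • y)
      + X.mulVec (x - (2:ℝ)⁻¹ • y) ⬝ᵥ (x - (2:ℝ)⁻¹ • y)
      = 2 * (X.mulVec x ⬝ᵥ x) + 2⁻¹ * (X.mulVec y ⬝ᵥ y) := by
  simp only [Matrix.mulVec_add, Matrix.mulVec_sub, Matrix.mulVec_smul, add_dotProduct,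
    sub_dotProduct, dotProduct_add, dotProduct_sub, smul_dotProduct,
    dotProduct_smul, smul_eq_mul]
  ring

lemma const_eq (hbar : ℝ) (hhbar : 0 < hbar) (n : ℕ) (D : ℝ) (hD : 0 < D) :
    (2 * Real.pi * hbar)⁻¹ ^ n * ((Real.pi * hbar) ^ (-(n:ℝ)/4) * D ^ ((1:ℝ)/4))^2
      * ((4 * Real.pi * hbar) ^ ((n:ℝ)/2) / D ^ ((1:ℝ)/2))
    = (Real.pi * hbar)⁻¹ ^ n := by
  have hpi := Real.pi_pos
  have ha : 0 < Real.pi * hbar := by positivity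
  have h1 : ((Real.pi * hbar) ^ (-(n:ℝ)/4) * D ^ ((1:ℝ)/4))^2
      = (Real.pi * hbar) ^ (-(n:ℝ)/2) * D ^ ((1:ℝ)/2) := by
    rw [mul_pow, ← Real.rpow_natCast ((Real.pi * hbar) ^ (-(n:ℝ)/4)) 2,
      ← Real.rpow_natCast (D ^ ((1:ℝ)/4)) 2, ← Real.rpow_mul ha.le, ← Real.rpow_mul hD.le]
    congr 1 <;> · congr 1; ring
  rw [h1]
  have hDne : D ^ ((1:ℝ)/2) ≠ 0 := by positivity
  have h2 : (4 * Real.pi * hbar) ^ ((n:ℝ)/2) = 2 ^ n * (Real.pi * hbar) ^ ((n:ℝ)/2) := by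
    rw [show 4 * Real.pi * hbar = 4 * (Real.pi * hbar) by ring,
      Real.mul_rpow (by norm_num) ha.le,
      show (4:ℝ) = 2 ^ (2:ℝ) by norm_num, ← Real.rpow_mul (by norm_num)]
    congr 1
    rw [← Real.rpow_natCast 2 n]
    congr 1
    ring
  rw [h2]
  have h3 : (2 * Real.pi * hbar)⁻¹ ^ n = 2⁻¹ ^ n * (Real.pi * hbar)⁻¹ ^ n := by
    rw [show 2 * Real.pi * hbar = 2 * (Real.pi * hbar) by ring, mul_inv, mul_pow]
  rw [h3]
  have h4 : (Real.pi * hbar) ^ (-(n:ℝ)/2) * (Real.pi * hbar) ^ ((n:ℝ)/2) = 1 := by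
    rw [← Real.rpow_add ha, show (-(n:ℝ)/2 + (n:ℝ)/2) = 0 by ring, Real.rpow_zero]
  have h5 : (2:ℝ)⁻¹ ^ n * 2 ^ n = 1 := by rw [← mul_pow]; norm_num
  have h6 : D ^ ((1:ℝ)/2) * (D ^ ((1:ℝ)/2))⁻¹ = 1 := mul_inv_cancel₀ hDne
  calc (2:ℝ)⁻¹ ^ n * (Real.pi * hbar)⁻¹ ^ n * ((Real.pi * hbar) ^ (-(n:ℝ)/2) * D ^ ((1:ℝ)/2))
        * (2 ^ n * (Real.pi * hbar) ^ ((n:ℝ)/2) / D ^ ((1:ℝ)/2))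
      = (Real.pi * hbar)⁻¹ ^ n * (((2:ℝ)⁻¹ ^ n * 2 ^ n)
          * (((Real.pi * hbar) ^ (-(n:ℝ)/2) * (Real.pi * hbar) ^ ((n:ℝ)/2))
            * (D ^ ((1:ℝ)/2) * (D ^ ((1:ℝ)/2))⁻¹))) := by
        rw [div_eq_mul_inv]; ring
    _ = (Real.pi * hbar)⁻¹ ^ n := by rw [h4, h5, h6]; ring

theorem wigner_gauss' (hbar : ℝ) (hhbar : 0 < hbar) (n : ℕ)
    (X : Matrix (Fin n) (Fin n) ℝ) (hXs : X.IsSymm) (hX : X.PosDef) (x p : Fin n → ℝ) :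
    (((2 * Real.pi * hbar)⁻¹ ^ n : ℝ) : ℂ) *
    (∫ y : Fin n → ℝ,
      Complex.exp (-(Complex.I * ((p ⬝ᵥ y : ℝ) : ℂ)) / (hbar : ℂ)) *
        ((((Real.pi * hbar) ^ (-(n : ℝ) / 4) * X.det ^ ((1 : ℝ) / 4) : ℝ) : ℂ) *
          Complex.exp (-((X.mulVec (x + (2:ℝ)⁻¹ • y) ⬝ᵥ (x + (2:ℝ)⁻¹ • y) : ℝ) : ℂ) / (2 * (hbar : ℂ)))) *
        (starRingEnd ℂ) ((((Real.pi * hbar) ^ (-(n : ℝ) / 4) * X.det ^ ((1 : ℝ) / 4) : ℝ) : ℂ) *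
          Complex.exp (-((X.mulVec (x - (2:ℝ)⁻¹ • y) ⬝ᵥ (x - (2:ℝ)⁻¹ • y) : ℝ) : ℂ) / (2 * (hbar : ℂ)))))
    = (((Real.pi * hbar)⁻¹ ^ n : ℝ) : ℂ) *
        Complex.exp (-((X.mulVec x ⬝ᵥ x + X⁻¹.mulVec p ⬝ᵥ p : ℝ) : ℂ) / (hbar : ℂ)) := by
  have hpi := Real.pi_pos
  have hbne : (hbar : ℂ) ≠ 0 := Complex.ofReal_ne_zero.mpr hhbar.ne'
  set C : ℝ := (Real.pi * hbar) ^ (-(n : ℝ) / 4) * X.det ^ ((1 : ℝ) / 4) with hC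
  have hconj : ∀ r : ℝ, (starRingEnd ℂ) (-(r : ℂ) / (2 * (hbar : ℂ))) = -(r : ℂ) / (2 * (hbar : ℂ)) := by
    intro r
    simp [map_div₀, Complex.conj_ofReal, map_ofNat]
  have hpt : ∀ y : Fin n → ℝ,
      Complex.exp (-(Complex.I * ((p ⬝ᵥ y : ℝ) : ℂ)) / (hbar : ℂ)) *
        ((C : ℂ) * Complex.exp (-((X.mulVec (x + (2:ℝ)⁻¹ • y) ⬝ᵥ (x + (2:ℝ)⁻¹ • y) : ℝ) : ℂ) / (2 * (hbar : ℂ)))) *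
        (starRingEnd ℂ) ((C : ℂ) * Complex.exp (-((X.mulVec (x - (2:ℝ)⁻¹ • y) ⬝ᵥ (x - (2:ℝ)⁻¹ • y) : ℝ) : ℂ) / (2 * (hbar : ℂ))))
      = ((C ^ 2 : ℝ) : ℂ) * Complex.exp (-((X.mulVec x ⬝ᵥ x : ℝ) : ℂ) / (hbar : ℂ)) *
          Complex.exp (-(Complex.I * ((p ⬝ᵥ y : ℝ) : ℂ)) / (hbar : ℂ)
            - ((X.mulVec y ⬝ᵥ y : ℝ) : ℂ) / (4 * (hbar : ℂ))) := by
    intro y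
    rw [_root_.map_mul, Complex.conj_ofReal, ← Complex.exp_conj, hconj]
    have hqc : ((X.mulVec (x + (2:ℝ)⁻¹ • y) ⬝ᵥ (x + (2:ℝ)⁻¹ • y) : ℝ) : ℂ)
        + ((X.mulVec (x - (2:ℝ)⁻¹ • y) ⬝ᵥ (x - (2:ℝ)⁻¹ • y) : ℝ) : ℂ)
        = 2 * ((X.mulVec x ⬝ᵥ x : ℝ) : ℂ) + 2⁻¹ * ((X.mulVec y ⬝ᵥ y : ℝ) : ℂ) := by
      rw [← Complex.ofReal_add, quad_split X x y]; push_cast; ring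
    have hsum : -(Complex.I * ((p ⬝ᵥ y : ℝ) : ℂ)) / (hbar : ℂ)
        + (-((X.mulVec (x + (2:ℝ)⁻¹ • y) ⬝ᵥ (x + (2:ℝ)⁻¹ • y) : ℝ) : ℂ) / (2 * (hbar : ℂ))
          + -((X.mulVec (x - (2:ℝ)⁻¹ • y) ⬝ᵥ (x - (2:ℝ)⁻¹ • y) : ℝ) : ℂ) / (2 * (hbar : ℂ)))
        = -((X.mulVec x ⬝ᵥ x : ℝ) : ℂ) / (hbar : ℂ)
          + (-(Complex.I * ((p ⬝ᵥ y : ℝ) : ℂ)) / (hbar : ℂ)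
            - ((X.mulVec y ⬝ᵥ y : ℝ) : ℂ) / (4 * (hbar : ℂ))) := by
      linear_combination (-(1 : ℂ) / (2 * (hbar : ℂ))) * hqc
    calc Complex.exp (-(Complex.I * ((p ⬝ᵥ y : ℝ) : ℂ)) / (hbar : ℂ)) *
          ((C : ℂ) * Complex.exp (-((X.mulVec (x + (2:ℝ)⁻¹ • y) ⬝ᵥ (x + (2:ℝ)⁻¹ • y) : ℝ) : ℂ) / (2 * (hbar : ℂ)))) *
          ((C : ℂ) * Complex.exp (-((X.mulVec (x - (2:ℝ)⁻¹ • y) ⬝ᵥ (x - (2:ℝ)⁻¹ • y) : ℝ) : ℂ) / (2 * (hbar : ℂ))))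
        = ((C ^ 2 : ℝ) : ℂ) * Complex.exp (-(Complex.I * ((p ⬝ᵥ y : ℝ) : ℂ)) / (hbar : ℂ)
            + (-((X.mulVec (x + (2:ℝ)⁻¹ • y) ⬝ᵥ (x + (2:ℝ)⁻¹ • y) : ℝ) : ℂ) / (2 * (hbar : ℂ))
              + -((X.mulVec (x - (2:ℝ)⁻¹ • y) ⬝ᵥ (x - (2:ℝ)⁻¹ • y) : ℝ) : ℂ) / (2 * (hbar : ℂ)))) := by
          rw [Complex.exp_add, Complex.exp_add]
          push_cast
          ring
      _ = _ := by
          rw [hsum, Complex.exp_add]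
          ring
  simp_rw [hpt]
  rw [MeasureTheory.integral_const_mul]
  rw [key_integral hbar hhbar n X hX p]
  have hrearr : (((2 * Real.pi * hbar)⁻¹ ^ n : ℝ) : ℂ) *
      (((C ^ 2 : ℝ) : ℂ) * Complex.exp (-((X.mulVec x ⬝ᵥ x : ℝ) : ℂ) / (hbar : ℂ)) *
        ((((4 * Real.pi * hbar) ^ ((n : ℝ) / 2) / X.det ^ ((1 : ℝ) / 2) : ℝ) : ℂ) *
          Complex.exp (-((X⁻¹.mulVec p ⬝ᵥ p : ℝ) : ℂ) / (hbar : ℂ))))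
      = (((2 * Real.pi * hbar)⁻¹ ^ n * C ^ 2
            * ((4 * Real.pi * hbar) ^ ((n : ℝ) / 2) / X.det ^ ((1 : ℝ) / 2)) : ℝ) : ℂ) *
          (Complex.exp (-((X.mulVec x ⬝ᵥ x : ℝ) : ℂ) / (hbar : ℂ)) *
            Complex.exp (-((X⁻¹.mulVec p ⬝ᵥ p : ℝ) : ℂ) / (hbar : ℂ))) := by
    push_cast
    ring
  rw [hrearr, ← Complex.exp_add, hC, const_eq hbar hhbar n X.det hX.det_pos]
  congr 1
  push_cast
  ring

/-- The Wigner transform of the Gaussian `ψ_X` is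
`(πħ)⁻ⁿ e^{-(X x·x + X⁻¹ p·p)/ħ}`, i.e. `(πħ)⁻ⁿ e^{-G z·z/ħ}` with `G = [[X,0],[0,X⁻¹]]`. -/
theorem wigner_gauss (hbar : ℝ) (hhbar : 0 < hbar) (n : ℕ)
    (X : Matrix (Fin n) (Fin n) ℝ) (hXs : X.IsSymm) (hX : X.PosDef) (x p : Fin n → ℝ) :
    wigner hbar n (gauss hbar n X) x p =
      (((Real.pi * hbar)⁻¹ ^ n : ℝ) : ℂ) *
        Complex.exp (-((X.mulVec x ⬝ᵥ x + X⁻¹.mulVec p ⬝ᵥ p : ℝ) : ℂ) / (hbar : ℂ)) ∧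
    wigner hbar n (gauss hbar n X) x p =
      (((Real.pi * hbar)⁻¹ ^ n : ℝ) : ℂ) *
        Complex.exp (-(((Matrix.fromBlocks X 0 0 X⁻¹).mulVec (Sum.elim x p) ⬝ᵥ
          Sum.elim x p : ℝ) : ℂ) / (hbar : ℂ)) := by
  have h1 : wigner hbar n (gauss hbar n X) x p =
      (((Real.pi * hbar)⁻¹ ^ n : ℝ) : ℂ) *
        Complex.exp (-((X.mulVec x ⬝ᵥ x + X⁻¹.mulVec p ⬝ᵥ p : ℝ) : ℂ) / (hbar : ℂ)) := by
    unfold wigner gauss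
    exact wigner_gauss' hbar hhbar n X hXs hX x p
  have hblock : (Matrix.fromBlocks X 0 0 X⁻¹).mulVec (Sum.elim x p) ⬝ᵥ Sum.elim x p
      = X.mulVec x ⬝ᵥ x + X⁻¹.mulVec p ⬝ᵥ p := by
    rw [Matrix.fromBlocks_mulVec, sumElim_dotProduct_sumElim]
    simp [Matrix.zero_mulVec]
  exact ⟨h1, h1.trans (by rw [hblock])⟩

end
end

section
/- Let X and Y be real symmetric n×n matrices with X positive definite, and let ψ_{X,Y} be the Gaussian ψ_{X,Y}(x) = (πħ)^{−n/4} (det X)^{1/4} e^{−((X + iY) x·x)/(2ħ)}. Then for all z = (x, p) ∈ ℝ²ⁿ, Wψ_{X,Y}(z) = (πħ)⁻ⁿ e^{−(G z·z)/ħ}, where G is the 2n×2n symmetric positive definite matrix with n×n blocks G = [[X + Y X⁻¹ Y, Y X⁻¹], [X⁻¹ Y, X⁻¹]]. -/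
open MeasureTheory Matrix

noncomputable section

open Complex

lemma symm_dot {n : ℕ} {M : Matrix (Fin n) (Fin n) ℝ} (h : M.IsSymm) (u v : Fin n → ℝ) :
    M.mulVec u ⬝ᵥ v = u ⬝ᵥ M.mulVec v := by
  rw [Matrix.dotProduct_mulVec, ← Matrix.mulVec_transpose, h.eq]

lemma swap_dot {n : ℕ} {M : Matrix (Fin n) (Fin n) ℝ} (h : M.IsSymm) (u v : Fin n → ℝ) :
    M.mulVec u ⬝ᵥ v = M.mulVec v ⬝ᵥ u := by
  rw [symm_dot h, dotProduct_comm]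

lemma posdef_smul {n : ℕ} {M : Matrix (Fin n) (Fin n) ℝ} (hM : M.PosDef) {c : ℝ} (hc : 0 < c) :
    (c • M).PosDef := by
  exact hM.smul hc

lemma quad_expand_add {n : ℕ} {M : Matrix (Fin n) (Fin n) ℝ} (h : M.IsSymm) (u v : Fin n → ℝ) :
    M.mulVec (u + (2:ℝ)⁻¹ • v) ⬝ᵥ (u + (2:ℝ)⁻¹ • v)
      = M.mulVec u ⬝ᵥ u + M.mulVec u ⬝ᵥ v + 4⁻¹ * (M.mulVec v ⬝ᵥ v) := by
  have hs := swap_dot h v u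
  simp only [Matrix.mulVec_add, Matrix.mulVec_smul, add_dotProduct,
    dotProduct_add, smul_dotProduct, dotProduct_smul, smul_eq_mul, hs]
  ring

lemma quad_expand_sub {n : ℕ} {M : Matrix (Fin n) (Fin n) ℝ} (h : M.IsSymm) (u v : Fin n → ℝ) :
    M.mulVec (u - (2:ℝ)⁻¹ • v) ⬝ᵥ (u - (2:ℝ)⁻¹ • v)
      = M.mulVec u ⬝ᵥ u - M.mulVec u ⬝ᵥ v + 4⁻¹ * (M.mulVec v ⬝ᵥ v) := by
  have hs := swap_dot h v u
  simp only [Matrix.mulVec_sub, Matrix.mulVec_smul, sub_dotProduct,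
    dotProduct_sub, smul_dotProduct, dotProduct_smul, smul_eq_mul, hs]
  ring

lemma block_identity {n : ℕ} {X Y : Matrix (Fin n) (Fin n) ℝ} (hXs : X.IsSymm) (hYs : Y.IsSymm)
    (hX : X.PosDef) (x p : Fin n → ℝ) :
    (Matrix.fromBlocks (X + Y * X⁻¹ * Y) (Y * X⁻¹) (X⁻¹ * Y) X⁻¹).mulVec
        (Sum.elim x p) ⬝ᵥ Sum.elim x p
      = X.mulVec x ⬝ᵥ x + X⁻¹.mulVec (p + Y.mulVec x) ⬝ᵥ (p + Y.mulVec x) := by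
  have hXinv : (X⁻¹).IsSymm := by
    rw [Matrix.IsSymm, Matrix.transpose_nonsing_inv, hXs.eq]
  rw [Matrix.fromBlocks_mulVec, sumElim_dotProduct_sumElim]
  simp only [Matrix.add_mulVec, Matrix.mulVec_add, add_dotProduct,
    dotProduct_add, ← Matrix.mulVec_mulVec, Sum.elim_comp_inl, Sum.elim_comp_inr]
  have e1 : Y.mulVec (X⁻¹.mulVec (Y.mulVec x)) ⬝ᵥ x
      = X⁻¹.mulVec (Y.mulVec x) ⬝ᵥ Y.mulVec x := by
    rw [symm_dot hYs, dotProduct_comm]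
  have e2 : Y.mulVec (X⁻¹.mulVec p) ⬝ᵥ x = X⁻¹.mulVec p ⬝ᵥ Y.mulVec x := by
    rw [symm_dot hYs, dotProduct_comm]
  have e3 : X⁻¹.mulVec p ⬝ᵥ Y.mulVec x = X⁻¹.mulVec (Y.mulVec x) ⬝ᵥ p := by
    rw [swap_dot hXinv, dotProduct_comm]
  rw [e1, e2, e3]
  ring

lemma coef_eq {h d : ℝ} (hh : 0 < h) (hd : 0 < d) (n : ℕ) :
    ((2 * Real.pi * h)⁻¹) ^ n * ((Real.pi * h) ^ (-(n:ℝ)/4) * d ^ ((1:ℝ)/4)) ^ 2 *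
      Real.sqrt (Real.pi ^ n / (((4 * h)⁻¹) ^ n * d)) = ((Real.pi * h)⁻¹) ^ n := by
  have hπ := Real.pi_pos
  have hph : 0 < Real.pi * h := by positivity
  have l0 : (0:ℝ) ≤ ((2 * Real.pi * h)⁻¹) ^ n * ((Real.pi * h) ^ (-(n:ℝ)/4) * d ^ ((1:ℝ)/4)) ^ 2 *
      Real.sqrt (Real.pi ^ n / (((4 * h)⁻¹) ^ n * d)) := by positivity
  have r0 : (0:ℝ) ≤ ((Real.pi * h)⁻¹) ^ n := by positivity
  rw [← Real.sqrt_sq l0, ← Real.sqrt_sq r0]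
  congr 1
  rw [mul_pow, mul_pow, Real.sq_sqrt (by positivity)]
  have mid : (((Real.pi * h) ^ (-(n:ℝ)/4) * d ^ ((1:ℝ)/4)) ^ 2) ^ 2
      = ((Real.pi * h) ^ n)⁻¹ * d := by
    rw [← pow_mul, mul_pow, ← Real.rpow_natCast ((Real.pi * h) ^ (-(n:ℝ)/4)) 4,
      ← Real.rpow_natCast (d ^ ((1:ℝ)/4)) 4,
      ← Real.rpow_mul hph.le, ← Real.rpow_mul hd.le,
      show (-(n:ℝ)/4) * ((4:ℕ):ℝ) = -(n:ℝ) by push_cast; ring,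
      show ((1:ℝ)/4) * ((4:ℕ):ℝ) = (1:ℝ) by push_cast; ring,
      Real.rpow_one, Real.rpow_neg hph.le, Real.rpow_natCast]
  rw [mid]
  field_simp
  have h4 : ((4:ℝ) * h) ^ n = (2:ℝ)^n * (2:ℝ)^n * h^n := by
    rw [show (4:ℝ)*h = 2*(2*h) by ring, mul_pow, mul_pow]; ring
  have h2 : ((2:ℝ) * Real.pi * h) ^ n = (2:ℝ)^n * (Real.pi ^ n * h ^ n) := by
    rw [mul_pow, mul_pow]; ring
  simp only [one_div, inv_pow, mul_pow, show (4:ℝ) = 2*2 by norm_num]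
  field_simp

lemma integral_comp_mulVec {n : ℕ} {M : Matrix (Fin n) (Fin n) ℝ} (hM : M.det ≠ 0)
    (f : (Fin n → ℝ) → ℂ) (hf : Continuous f) :
    ∫ y : Fin n → ℝ, f (M.mulVec y) = |M.det|⁻¹ • ∫ y : Fin n → ℝ, f y := by
  have h1 : ∫ y : Fin n → ℝ, f (M.mulVec y) = ∫ y, f ((Matrix.toLin' M) y) := rfl
  rw [h1, ← MeasureTheory.integral_map
    (LinearMap.continuous_of_finiteDimensional (Matrix.toLin' M)).measurable.aemeasurable
    hf.aestronglyMeasurable,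
    Real.map_matrix_volume_pi_eq_smul_volume_pi hM, integral_smul_measure,
    ENNReal.toReal_ofReal (abs_nonneg _), abs_inv]


lemma posSemidef_det_nonneg {n : ℕ} {M : Matrix (Fin n) (Fin n) ℝ} (h : M.PosSemidef) :
    0 ≤ M.det := by
  rw [h.1.det_eq_prod_eigenvalues]
  exact Finset.prod_nonneg fun i _ => h.eigenvalues_nonneg i

lemma gauss_fourier {n : ℕ} {A : Matrix (Fin n) (Fin n) ℝ} (hA : A.PosDef) (b : Fin n → ℝ) :
    ∫ y : Fin n → ℝ, Complex.exp (-((A.mulVec y ⬝ᵥ y : ℝ) : ℂ) + Complex.I * ((b ⬝ᵥ y : ℝ) : ℂ)) =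
      ((Real.sqrt (Real.pi ^ n / A.det) : ℝ) : ℂ) *
        Complex.exp (-(((A⁻¹.mulVec b ⬝ᵥ b : ℝ)) : ℂ) / 4) := by
  classical
  obtain ⟨S, hSps, hSS⟩ : ∃ S : Matrix (Fin n) (Fin n) ℝ, S.PosSemidef ∧ S * S = A :=
    by
      open scoped MatrixOrder in
      exact ⟨CFC.sqrt A, (CFC.sqrt_nonneg A).posSemidef, CFC.sqrt_mul_sqrt_self A hA.posSemidef.nonneg⟩
  have hSsym : S.IsSymm := by
    have := hSps.1
    rwa [Matrix.IsHermitian, Matrix.conjTranspose_eq_transpose_of_trivial] at this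
  have hdet2 : S.det * S.det = A.det := by rw [← Matrix.det_mul, hSS]
  have hAdetpos : 0 < A.det := hA.det_pos
  have hSdet_nonneg : 0 ≤ S.det := posSemidef_det_nonneg hSps
  have hSdet_ne : S.det ≠ 0 := by
    intro h; rw [h, mul_zero] at hdet2; exact hAdetpos.ne' hdet2.symm
  have hSdet : S.det = Real.sqrt A.det := by
    rw [← hdet2, Real.sqrt_mul_self hSdet_nonneg]
  have hAinv : A⁻¹ = S⁻¹ * S⁻¹ := by rw [← hSS, Matrix.mul_inv_rev]
  have hSinv_symm : (S⁻¹).IsSymm := by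
    rw [Matrix.IsSymm, Matrix.transpose_nonsing_inv, hSsym.eq]
  set c : Fin n → ℝ := S⁻¹.mulVec b with hc
  set f : (Fin n → ℝ) → ℂ :=
    fun u => Complex.exp (-((u ⬝ᵥ u : ℝ) : ℂ) + Complex.I * ((c ⬝ᵥ u : ℝ) : ℂ)) with hf
  have hfc : Continuous f := by
    apply Complex.continuous_exp.comp
    simp only [dotProduct]
    fun_prop
  have key : ∀ y : Fin n → ℝ,
      Complex.exp (-((A.mulVec y ⬝ᵥ y : ℝ) : ℂ) + Complex.I * ((b ⬝ᵥ y : ℝ) : ℂ))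
        = f (S.mulVec y) := by
    intro y
    have h1 : A.mulVec y ⬝ᵥ y = S.mulVec y ⬝ᵥ S.mulVec y := by
      rw [← hSS, ← Matrix.mulVec_mulVec, symm_dot hSsym]
    have h2 : b ⬝ᵥ y = c ⬝ᵥ S.mulVec y := by
      rw [hc, symm_dot hSinv_symm, Matrix.mulVec_mulVec, Matrix.nonsing_inv_mul _ (isUnit_iff_ne_zero.mpr hSdet_ne),
        Matrix.one_mulVec]
    rw [hf, h1, h2]
  rw [integral_congr_ae (Filter.Eventually.of_forall key),
    integral_comp_mulVec hSdet_ne f hfc]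
  have hfeq : ∀ u : Fin n → ℝ,
      f u = Complex.exp (-(1:ℂ) * ∑ i, ((u i : ℂ)) ^ 2 + ∑ i, (Complex.I * (c i : ℂ)) * (u i : ℂ)) := by
    intro u
    rw [hf]
    apply congrArg
    push_cast [dotProduct]
    rw [Finset.mul_sum, neg_one_mul]
    have e1 : ∑ i, ((u i : ℂ)) ^ 2 = ∑ i, (u i : ℂ) * (u i : ℂ) :=
      Finset.sum_congr rfl fun i _ => by ring
    have e2 : ∑ i, (Complex.I * (c i : ℂ)) * (u i : ℂ) = ∑ i, Complex.I * ((c i : ℂ) * (u i : ℂ)) :=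
      Finset.sum_congr rfl fun i _ => by ring
    rw [e1, e2]
  have hfint : ∫ u : Fin n → ℝ, f u
      = ((Real.pi : ℂ) / 1) ^ ((Fintype.card (Fin n) : ℂ) / 2) *
        Complex.exp ((∑ i, (Complex.I * (c i : ℂ)) ^ 2) / (4 * 1)) := by
    rw [integral_congr_ae (Filter.Eventually.of_forall hfeq)]
    exact GaussianFourier.integral_cexp_neg_mul_sum_add (by norm_num) _
  have hsum : ∑ i, (Complex.I * (c i : ℂ)) ^ 2 = -((c ⬝ᵥ c : ℝ) : ℂ) := by
    push_cast [dotProduct]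
    rw [← Finset.sum_neg_distrib]
    exact Finset.sum_congr rfl fun i _ => by rw [mul_pow, Complex.I_sq]; ring
  have hcc : c ⬝ᵥ c = A⁻¹.mulVec b ⬝ᵥ b := by
    rw [hc, symm_dot hSinv_symm, Matrix.mulVec_mulVec, ← hAinv, dotProduct_comm]
  rw [hfint, hsum, hcc, ← smul_mul_assoc]
  congr 1
  · rw [div_one, Complex.real_smul]
    have hcard : ((Fintype.card (Fin n) : ℂ) / 2) = (((n : ℝ) / 2 : ℝ) : ℂ) := by
      push_cast [Fintype.card_fin]; ring
    rw [hcard, ← Complex.ofReal_cpow Real.pi_nonneg, ← Complex.ofReal_mul,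
      Complex.ofReal_inj]
    have hpow : Real.pi ^ ((n : ℝ) / 2) = Real.sqrt (Real.pi ^ n) := by
      rw [Real.sqrt_eq_rpow, ← Real.rpow_natCast Real.pi n, ← Real.rpow_mul Real.pi_nonneg]
      ring_nf
    rw [hpow, _root_.abs_of_nonneg hSdet_nonneg, hSdet, Real.sqrt_div (by positivity) A.det,
      div_eq_inv_mul]
  · norm_num

lemma conj_aux (a b h : ℝ) :
    (starRingEnd ℂ) (-((a:ℂ) + Complex.I * (b:ℂ)) / (2 * (h:ℂ)))
      = -((a:ℂ) - Complex.I * (b:ℂ)) / (2 * (h:ℂ)) := by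
  simp [map_div₀, map_neg, map_add, _root_.map_mul, map_ofNat, Complex.conj_ofReal, Complex.conj_I]
  ring

/-- The Wigner transform of the complex Gaussian `ψ_{X,Y}` is
`(πħ)⁻ⁿ e^{-G z·z/ħ}` with `G = [[X + Y X⁻¹ Y, Y X⁻¹], [X⁻¹ Y, X⁻¹]]`. -/
theorem wigner_gaussXY (hbar : ℝ) (hhbar : 0 < hbar) (n : ℕ)
    (X Y : Matrix (Fin n) (Fin n) ℝ) (hXs : X.IsSymm) (hYs : Y.IsSymm) (hX : X.PosDef)
    (x p : Fin n → ℝ) :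
    wigner hbar n (gaussXY hbar n X Y) x p =
      (((Real.pi * hbar)⁻¹ ^ n : ℝ) : ℂ) *
        Complex.exp (-(((Matrix.fromBlocks (X + Y * X⁻¹ * Y) (Y * X⁻¹) (X⁻¹ * Y) X⁻¹).mulVec
          (Sum.elim x p) ⬝ᵥ Sum.elim x p : ℝ) : ℂ) / (hbar : ℂ)) := by
  have hπ := Real.pi_pos
  have hh0 : (hbar:ℂ) ≠ 0 := by exact_mod_cast hhbar.ne'
  set A := ((4*hbar)⁻¹) • X with hAdef
  have hApos : A.PosDef := posdef_smul hX (by positivity)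
  set b := -(hbar⁻¹ • (p + Y.mulVec x)) with hbdef
  set C : ℝ := (Real.pi * hbar) ^ (-(n:ℝ)/4) * X.det ^ ((1:ℝ)/4) with hCdef
  have key : ∀ y : Fin n → ℝ,
      Complex.exp (-(Complex.I * ((p ⬝ᵥ y : ℝ) : ℂ)) / (hbar : ℂ)) *
          gaussXY hbar n X Y (x + (2:ℝ)⁻¹ • y) *
          (starRingEnd ℂ) (gaussXY hbar n X Y (x - (2:ℝ)⁻¹ • y))
        = ((C:ℂ)^2 * Complex.exp (-((X.mulVec x ⬝ᵥ x : ℝ) : ℂ) / (hbar:ℂ))) *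
          Complex.exp (-((A.mulVec y ⬝ᵥ y : ℝ) : ℂ) + Complex.I * ((b ⬝ᵥ y : ℝ) : ℂ)) := by
    intro y
    rw [gaussXY, gaussXY, _root_.map_mul, Complex.conj_ofReal, ← Complex.exp_conj, conj_aux]
    rw [quad_expand_add hXs x y, quad_expand_add hYs x y,
      quad_expand_sub hXs x y, quad_expand_sub hYs x y]
    have hAyy : A.mulVec y ⬝ᵥ y = (4*hbar)⁻¹ * (X.mulVec y ⬝ᵥ y) := by
      rw [hAdef]
      simp [Matrix.smul_mulVec, smul_dotProduct, smul_eq_mul]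
    have hby : b ⬝ᵥ y = -(hbar⁻¹ * (p ⬝ᵥ y + Y.mulVec x ⬝ᵥ y)) := by
      rw [hbdef]
      simp [neg_dotProduct, smul_dotProduct, add_dotProduct, smul_eq_mul]
      ring
    rw [hAyy, hby, ← hCdef]
    have hrearr : ∀ T U V : ℂ, Complex.exp T * ((C:ℂ) * Complex.exp U) *
        ((C:ℂ) * Complex.exp V) = (C:ℂ)^2 * Complex.exp (T + U + V) := fun T U V => by
      rw [Complex.exp_add, Complex.exp_add]; ring
    rw [hrearr, mul_assoc, ← Complex.exp_add]
    congr 1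
    push_cast
    field_simp
    ring
  rw [wigner, integral_congr_ae (Filter.Eventually.of_forall key),
    MeasureTheory.integral_const_mul, gauss_fourier hApos b]
  have hAdet : A.det = ((4*hbar)⁻¹)^n * X.det := by
    rw [hAdef, Matrix.det_smul, Fintype.card_fin]
  have hXdet_unit : IsUnit X.det := isUnit_iff_ne_zero.mpr hX.det_pos.ne'
  have hAinvM : A⁻¹ = (4*hbar) • X⁻¹ := by
    apply Matrix.inv_eq_right_inv
    rw [hAdef, Matrix.smul_mul, Matrix.mul_smul, smul_smul,
      Matrix.mul_nonsing_inv _ hXdet_unit,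
      inv_mul_cancel₀ (by positivity : (4*hbar : ℝ) ≠ 0), one_smul]
  have hq : A⁻¹.mulVec b ⬝ᵥ b
      = 4 * hbar⁻¹ * (X⁻¹.mulVec (p + Y.mulVec x) ⬝ᵥ (p + Y.mulVec x)) := by
    rw [hAinvM, hbdef]
    simp only [Matrix.smul_mulVec, Matrix.mulVec_neg, Matrix.mulVec_smul,
      neg_dotProduct, dotProduct_neg, smul_dotProduct,
      dotProduct_smul, smul_eq_mul, neg_neg, smul_neg]
    field_simp
  have hGid := block_identity hXs hYs hX x p
  have hexp : Complex.exp (-((X.mulVec x ⬝ᵥ x : ℝ) : ℂ) / (hbar:ℂ)) *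
        Complex.exp (-((A⁻¹.mulVec b ⬝ᵥ b : ℝ) : ℂ) / 4)
      = Complex.exp (-(((Matrix.fromBlocks (X + Y * X⁻¹ * Y) (Y * X⁻¹) (X⁻¹ * Y) X⁻¹).mulVec
          (Sum.elim x p) ⬝ᵥ Sum.elim x p : ℝ) : ℂ) / (hbar : ℂ)) := by
    rw [← Complex.exp_add, hq, hGid]
    congr 1
    push_cast
    field_simp
    ring
  have hcoef : ((2*Real.pi*hbar)⁻¹ ^ n : ℝ) * (C^2 * Real.sqrt (Real.pi^n / A.det))
      = ((Real.pi*hbar)⁻¹)^n := by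
    rw [hAdet, hCdef, ← mul_assoc]
    exact coef_eq hhbar hX.det_pos n
  calc (((2*Real.pi*hbar)⁻¹ ^ n : ℝ) : ℂ) *
        ((C:ℂ)^2 * Complex.exp (-((X.mulVec x ⬝ᵥ x : ℝ) : ℂ) / (hbar:ℂ)) *
          (((Real.sqrt (Real.pi^n / A.det) : ℝ) : ℂ) *
            Complex.exp (-((A⁻¹.mulVec b ⬝ᵥ b : ℝ) : ℂ) / 4)))
      = ((((2*Real.pi*hbar)⁻¹ ^ n : ℝ) * (C^2 * Real.sqrt (Real.pi^n / A.det)) : ℝ) : ℂ) *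
        (Complex.exp (-((X.mulVec x ⬝ᵥ x : ℝ) : ℂ) / (hbar:ℂ)) *
          Complex.exp (-((A⁻¹.mulVec b ⬝ᵥ b : ℝ) : ℂ) / 4)) := by
        push_cast
        ring
    _ = (((Real.pi * hbar)⁻¹ ^ n : ℝ) : ℂ) *
        Complex.exp (-(((Matrix.fromBlocks (X + Y * X⁻¹ * Y) (Y * X⁻¹) (X⁻¹ * Y) X⁻¹).mulVec
          (Sum.elim x p) ⬝ᵥ Sum.elim x p : ℝ) : ℂ) / (hbar : ℂ)) := by
        rw [hcoef, hexp]

end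
end

section
/- Let a be a Schwartz function on ℝ²ⁿ and let ψ, φ be Schwartz functions on ℝⁿ. Then ∫_{ℝⁿ} (Â_a ψ)(x) conj(φ(x)) dx = ∫_{ℝ²ⁿ} a(z) W(ψ, φ)(z) dz. -/
open MeasureTheory Matrix

noncomputable section

namespace WeylPairingAux

/-- The full integrand of the triple integral giving the LHS, in coordinates `((x,y),p)`. -/
def Fk (hbar : ℝ) (n : ℕ) (a : ((Fin n ⊕ Fin n) → ℝ) → ℂ) (ψ φ : (Fin n → ℝ) → ℂ)
    (q : ((Fin n → ℝ) × (Fin n → ℝ)) × (Fin n → ℝ)) : ℂ :=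
  (((2 * Real.pi * hbar)⁻¹ ^ n : ℝ) : ℂ) *
    (Complex.exp (Complex.I * ((q.2 ⬝ᵥ (q.1.1 - q.1.2) : ℝ) : ℂ) / (hbar : ℂ)) *
      a (Sum.elim ((2 : ℝ)⁻¹ • (q.1.1 + q.1.2)) q.2)) *
    ψ q.1.2 * (starRingEnd ℂ) (φ q.1.1)

/-- The full integrand of the triple integral giving the RHS, in coordinates `((u,p),v)`. -/
def Gk (hbar : ℝ) (n : ℕ) (a : ((Fin n ⊕ Fin n) → ℝ) → ℂ) (ψ φ : (Fin n → ℝ) → ℂ)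
    (q : ((Fin n → ℝ) × (Fin n → ℝ)) × (Fin n → ℝ)) : ℂ :=
  (((2 * Real.pi * hbar)⁻¹ ^ n : ℝ) : ℂ) *
    (Complex.exp (-(Complex.I * ((q.1.2 ⬝ᵥ q.2 : ℝ) : ℂ)) / (hbar : ℂ)) *
      ψ (q.1.1 + (2 : ℝ)⁻¹ • q.2) * (starRingEnd ℂ) (φ (q.1.1 - (2 : ℝ)⁻¹ • q.2))) *
    a (Sum.elim q.1.1 q.1.2)

/-- First shear `(v, u) ↦ (v, u - v/2)` as a measurable equivalence. -/
def shear1 (n : ℕ) : ((Fin n → ℝ) × (Fin n → ℝ)) ≃ᵐ ((Fin n → ℝ) × (Fin n → ℝ)) where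
  toEquiv :=
  { toFun := fun z => (z.1, z.2 - (2 : ℝ)⁻¹ • z.1)
    invFun := fun z => (z.1, z.2 + (2 : ℝ)⁻¹ • z.1)
    left_inv := fun z => by simp
    right_inv := fun z => by simp }
  measurable_toFun :=
    (show Continuous fun z : (Fin n → ℝ) × (Fin n → ℝ) => (z.1, z.2 - (2 : ℝ)⁻¹ • z.1) by
      fun_prop).measurable
  measurable_invFun :=
    (show Continuous fun z : (Fin n → ℝ) × (Fin n → ℝ) => (z.1, z.2 + (2 : ℝ)⁻¹ • z.1) by
      fun_prop).measurable

/-- Second shear `(x, v) ↦ (x, x + v)` as a measurable equivalence. -/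
def shear2 (n : ℕ) : ((Fin n → ℝ) × (Fin n → ℝ)) ≃ᵐ ((Fin n → ℝ) × (Fin n → ℝ)) where
  toEquiv :=
  { toFun := fun z => (z.1, z.1 + z.2)
    invFun := fun z => (z.1, z.2 - z.1)
    left_inv := fun z => by simp
    right_inv := fun z => by simp }
  measurable_toFun := measurable_fst.prodMk (measurable_fst.add measurable_snd)
  measurable_invFun := measurable_fst.prodMk (measurable_snd.sub measurable_fst)

/-- `(v, u) ↦ (u - v/2, u + v/2)` as a measurable equivalence. -/
def mixEquiv (n : ℕ) : ((Fin n → ℝ) × (Fin n → ℝ)) ≃ᵐ ((Fin n → ℝ) × (Fin n → ℝ)) :=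
  (shear1 n).trans (MeasurableEquiv.prodComm.trans (shear2 n))

/-- `((u,p),v) ↦ ((u - v/2, u + v/2), p)` as a measurable equivalence. -/
def fullEquiv (n : ℕ) :
    (((Fin n → ℝ) × (Fin n → ℝ)) × (Fin n → ℝ)) ≃ᵐ
      (((Fin n → ℝ) × (Fin n → ℝ)) × (Fin n → ℝ)) :=
  MeasurableEquiv.prodComm.trans
    (MeasurableEquiv.prodAssoc.symm.trans
      ((mixEquiv n).prodCongr (MeasurableEquiv.refl (Fin n → ℝ))))

lemma fullEquiv_apply (n : ℕ) (q : ((Fin n → ℝ) × (Fin n → ℝ)) × (Fin n → ℝ)) :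
    fullEquiv n q =
      ((q.1.1 - (2 : ℝ)⁻¹ • q.2, q.1.1 - (2 : ℝ)⁻¹ • q.2 + q.2), q.1.2) := rfl

lemma measurePreserving_mixEquiv (n : ℕ) :
    MeasurePreserving (⇑(mixEquiv n)) (volume.prod volume) (volume.prod volume) := by
  have h1 : MeasurePreserving (⇑(shear1 n)) (volume.prod volume) (volume.prod volume) :=
    MeasurePreserving.skew_product (g := fun v u => u - (2 : ℝ)⁻¹ • v)
      (MeasurePreserving.id volume)
      (show Continuous fun z : (Fin n → ℝ) × (Fin n → ℝ) => z.2 - (2 : ℝ)⁻¹ • z.1 by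
        fun_prop).measurable
      (ae_of_all _ fun v => by
        simpa [sub_eq_add_neg] using
          (measurePreserving_add_right volume (-((2 : ℝ)⁻¹ • v))).map_eq)
  have h2 : MeasurePreserving (⇑(shear2 n)) (volume.prod volume) (volume.prod volume) :=
    MeasurePreserving.skew_product (g := fun x v => x + v)
      (MeasurePreserving.id volume)
      (measurable_fst.add measurable_snd)
      (ae_of_all _ fun x => (measurePreserving_add_left volume x).map_eq)
  have hsw : MeasurePreserving
      (⇑(MeasurableEquiv.prodComm : ((Fin n → ℝ) × (Fin n → ℝ)) ≃ᵐ _))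
      (volume.prod volume) (volume.prod volume) := Measure.measurePreserving_swap
  exact h2.comp (hsw.comp h1)

lemma measurePreserving_fullEquiv (n : ℕ) :
    MeasurePreserving (⇑(fullEquiv n)) ((volume.prod volume).prod volume)
      ((volume.prod volume).prod volume) := by
  have h1 : MeasurePreserving
      (⇑(MeasurableEquiv.prodComm :
        (((Fin n → ℝ) × (Fin n → ℝ)) × (Fin n → ℝ)) ≃ᵐ _))
      ((volume.prod volume).prod volume) (volume.prod (volume.prod volume)) :=
    Measure.measurePreserving_swap
  have h2 : MeasurePreserving
      (⇑((MeasurableEquiv.prodAssoc :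
        (((Fin n → ℝ) × (Fin n → ℝ)) × (Fin n → ℝ)) ≃ᵐ _).symm)
      ) (volume.prod (volume.prod volume)) ((volume.prod volume).prod volume) :=
    MeasurePreserving.symm _ (measurePreserving_prodAssoc volume volume volume)
  have h3 : MeasurePreserving
      (⇑((mixEquiv n).prodCongr (MeasurableEquiv.refl (Fin n → ℝ))))
      ((volume.prod volume).prod volume) ((volume.prod volume).prod volume) :=
    (measurePreserving_mixEquiv n).prod (MeasurePreserving.id volume)
  exact h3.comp (h2.comp h1)

end WeylPairingAux

/-- `⟨Â_a ψ, conj φ⟩ = ⟨⟨a, W(ψ,φ)⟩⟩`: the Weyl operator pairs with the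
cross-Wigner transform. -/
theorem weyl_pairing_crossWigner (hbar : ℝ) (hhbar : 0 < hbar) (n : ℕ)
    (a : SchwartzMap ((Fin n ⊕ Fin n) → ℝ) ℂ) (ψ φ : SchwartzMap (Fin n → ℝ) ℂ) :
    ∫ x : Fin n → ℝ, weyl hbar n (⇑a) (⇑ψ) x * (starRingEnd ℂ) (φ x) =
      ∫ z : (Fin n ⊕ Fin n) → ℝ, a z * crossWignerZ hbar n (⇑ψ) (⇑φ) z := by
  classical
  set F := WeylPairingAux.Fk hbar n (⇑a) (⇑ψ) (⇑φ) with hFdef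
  set G := WeylPairingAux.Gk hbar n (⇑a) (⇑ψ) (⇑φ) with hGdef
  -- the modulus of the oscillatory factor is 1
  have hexp1 : ∀ r : ℝ, ‖Complex.exp (Complex.I * (r : ℂ) / (hbar : ℂ))‖ = 1 := by
    intro r
    rw [show Complex.I * (r : ℂ) / (hbar : ℂ) = ((r / hbar : ℝ) : ℂ) * Complex.I by
      push_cast; ring]
    exact Complex.norm_exp_ofReal_mul_I _
  -- continuity of F
  have hdot : Continuous fun q : ((Fin n → ℝ) × (Fin n → ℝ)) × (Fin n → ℝ) =>
      q.2 ⬝ᵥ (q.1.1 - q.1.2) := by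
    show Continuous fun q : ((Fin n → ℝ) × (Fin n → ℝ)) × (Fin n → ℝ) =>
      ∑ i, q.2 i * (q.1.1 i - q.1.2 i)
    refine continuous_finset_sum _ fun i _ => ?_
    exact ((continuous_apply i).comp continuous_snd).mul
      (((continuous_apply i).comp (continuous_fst.comp continuous_fst)).sub
        ((continuous_apply i).comp (continuous_snd.comp continuous_fst)))
  have harg : Continuous fun q : ((Fin n → ℝ) × (Fin n → ℝ)) × (Fin n → ℝ) =>
      Sum.elim ((2 : ℝ)⁻¹ • (q.1.1 + q.1.2)) q.2 := by
    refine continuous_pi fun i => ?_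
    cases i with
    | inl j =>
      show Continuous fun q : ((Fin n → ℝ) × (Fin n → ℝ)) × (Fin n → ℝ) =>
        (2 : ℝ)⁻¹ * (q.1.1 j + q.1.2 j)
      exact continuous_const.mul
        (((continuous_apply j).comp (continuous_fst.comp continuous_fst)).add
          ((continuous_apply j).comp (continuous_snd.comp continuous_fst)))
    | inr j => exact (continuous_apply j).comp continuous_snd
  have hexpc : Continuous fun q : ((Fin n → ℝ) × (Fin n → ℝ)) × (Fin n → ℝ) =>
      Complex.exp (Complex.I * ((q.2 ⬝ᵥ (q.1.1 - q.1.2) : ℝ) : ℂ) / (hbar : ℂ)) :=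
    Complex.continuous_exp.comp
      ((continuous_const.mul (Complex.continuous_ofReal.comp hdot)).div_const _)
  have hcont : Continuous F := by
    rw [hFdef]
    unfold WeylPairingAux.Fk
    simp only [starRingEnd_apply]
    exact ((continuous_const.mul (hexpc.mul (a.continuous.comp harg))).mul
      (ψ.continuous.comp (continuous_snd.comp continuous_fst))).mul
      ((φ.continuous.comp (continuous_fst.comp continuous_fst)).star)
  -- decay bound for a
  obtain ⟨C, hC⟩ : ∃ C : ℝ, ∀ z : (Fin n ⊕ Fin n) → ℝ, (1 + ‖z‖) ^ (n + 1) * ‖a z‖ ≤ C := by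
    refine ⟨2 ^ (n + 1) * ((Finset.Iic ((n + 1 : ℕ), (0 : ℕ))).sup
      (fun m => SchwartzMap.seminorm ℝ m.1 m.2)) a, fun z => ?_⟩
    have h := SchwartzMap.one_add_le_sup_seminorm_apply (𝕜 := ℝ)
      (m := ((n + 1 : ℕ), (0 : ℕ))) le_rfl le_rfl a z
    simpa [norm_iteratedFDeriv_zero] using h
  have habs : ∀ (u p : Fin n → ℝ),
      ‖a (Sum.elim u p)‖ ≤ C * ((1 + ‖p‖) ^ (n + 1))⁻¹ := by
    intro u p
    have hple : ‖p‖ ≤ ‖Sum.elim u p‖ := by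
      refine (pi_norm_le_iff_of_nonneg (norm_nonneg _)).2 fun i => ?_
      exact norm_le_pi_norm (Sum.elim u p) (Sum.inr i)
    have h1p : (0 : ℝ) < (1 + ‖p‖) ^ (n + 1) := by positivity
    rw [← div_eq_mul_inv, le_div_iff₀ h1p]
    calc ‖a (Sum.elim u p)‖ * (1 + ‖p‖) ^ (n + 1)
        ≤ ‖a (Sum.elim u p)‖ * (1 + ‖Sum.elim u p‖) ^ (n + 1) := by
          gcongr
      _ = (1 + ‖Sum.elim u p‖) ^ (n + 1) * ‖a (Sum.elim u p)‖ := mul_comm _ _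
      _ ≤ C := hC _
  -- integrability of F
  have hpint : Integrable (fun p : Fin n → ℝ => ((1 + ‖p‖) ^ (n + 1))⁻¹) volume := by
    have hnr : ((Module.finrank ℝ (Fin n → ℝ) : ℝ)) < ((n : ℝ) + 1) := by
      simp [Module.finrank_fintype_fun_eq_card]
    have h := integrable_one_add_norm (E := Fin n → ℝ) (μ := volume) hnr
    refine h.congr (ae_of_all _ fun p => ?_)
    have hb : (0 : ℝ) ≤ 1 + ‖p‖ := by positivity
    show (1 + ‖p‖) ^ (-((n : ℝ) + 1)) = ((1 + ‖p‖) ^ (n + 1))⁻¹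
    rw [show (-((n : ℝ) + 1)) = -((n + 1 : ℕ) : ℝ) by push_cast; ring,
      Real.rpow_neg hb, Real.rpow_natCast]
  have hbound : Integrable (fun q : ((Fin n → ℝ) × (Fin n → ℝ)) × (Fin n → ℝ) =>
      (‖φ q.1.1‖ * ‖ψ q.1.2‖) *
        (‖(((2 * Real.pi * hbar)⁻¹ ^ n : ℝ) : ℂ)‖ * C * ((1 + ‖q.2‖) ^ (n + 1))⁻¹))
      ((volume.prod volume).prod volume) := by
    have h1 : Integrable (fun w : (Fin n → ℝ) × (Fin n → ℝ) => ‖φ w.1‖ * ‖ψ w.2‖)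
        (volume.prod volume) := (φ.integrable.norm).mul_prod (ψ.integrable.norm)
    exact h1.mul_prod (hpint.const_mul _)
  have hFP : Integrable F ((volume.prod volume).prod volume) := by
    refine hbound.mono' hcont.aestronglyMeasurable (ae_of_all _ fun q => ?_)
    have e1 : ‖F q‖ = ‖(((2 * Real.pi * hbar)⁻¹ ^ n : ℝ) : ℂ)‖ *
        ‖a (Sum.elim ((2 : ℝ)⁻¹ • (q.1.1 + q.1.2)) q.2)‖ * ‖ψ q.1.2‖ * ‖φ q.1.1‖ := by
      rw [hFdef]
      simp only [WeylPairingAux.Fk, norm_mul, hexp1, one_mul, RCLike.norm_conj]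
    rw [e1]
    calc ‖(((2 * Real.pi * hbar)⁻¹ ^ n : ℝ) : ℂ)‖ *
        ‖a (Sum.elim ((2 : ℝ)⁻¹ • (q.1.1 + q.1.2)) q.2)‖ * ‖ψ q.1.2‖ * ‖φ q.1.1‖
        ≤ ‖(((2 * Real.pi * hbar)⁻¹ ^ n : ℝ) : ℂ)‖ *
          (C * ((1 + ‖q.2‖) ^ (n + 1))⁻¹) * ‖ψ q.1.2‖ * ‖φ q.1.1‖ := by
          gcongr
          exact habs _ _
      _ = (‖φ q.1.1‖ * ‖ψ q.1.2‖) *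
          (‖(((2 * Real.pi * hbar)⁻¹ ^ n : ℝ) : ℂ)‖ * C * ((1 + ‖q.2‖) ^ (n + 1))⁻¹) := by
          ring
  -- F ∘ fullEquiv = G
  have hFG : ∀ q, F (WeylPairingAux.fullEquiv n q) = G q := by
    rintro ⟨⟨u, p⟩, v⟩
    rw [WeylPairingAux.fullEquiv_apply]
    rw [hFdef, hGdef]
    simp only [WeylPairingAux.Fk, WeylPairingAux.Gk]
    have h1 : (u - (2 : ℝ)⁻¹ • v) - (u - (2 : ℝ)⁻¹ • v + v) = -v := by module
    have h2 : (2 : ℝ)⁻¹ • ((u - (2 : ℝ)⁻¹ • v) + (u - (2 : ℝ)⁻¹ • v + v)) = u := by module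
    have h3 : u - (2 : ℝ)⁻¹ • v + v = u + (2 : ℝ)⁻¹ • v := by module
    rw [h1, h2, h3, dotProduct_neg]
    push_cast
    ring_nf
  -- measure-preserving transport
  have hmΦ := WeylPairingAux.measurePreserving_fullEquiv n
  have hGP : Integrable G ((volume.prod volume).prod volume) := by
    have hcomp : F ∘ ⇑(WeylPairingAux.fullEquiv n) = G := funext hFG
    rw [← hcomp]
    exact (hmΦ.integrable_comp hcont.aestronglyMeasurable).mpr hFP
  -- pointwise identity for the LHS
  have hL : ∀ x : Fin n → ℝ, weyl hbar n (⇑a) (⇑ψ) x * (starRingEnd ℂ) (φ x)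
      = ∫ y, ∫ p, F ((x, y), p) := by
    intro x
    rw [weyl, ← integral_mul_const]
    refine integral_congr_ae (ae_of_all _ fun y => ?_)
    unfold weylKernel
    rw [hFdef]
    simp only [WeylPairingAux.Fk]
    rw [integral_mul_const, integral_mul_const, integral_const_mul]
  -- pointwise identity for the RHS
  have hG : ∀ w : (Fin n → ℝ) × (Fin n → ℝ),
      a (Sum.elim w.1 w.2) * crossWigner hbar n (⇑ψ) (⇑φ) w.1 w.2
        = ∫ v, G ((w.1, w.2), v) := by
    intro w
    rw [crossWigner, hGdef]
    simp only [WeylPairingAux.Gk]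
    rw [integral_mul_const, integral_const_mul]
    ring
  have hIpl : Integrable (fun w : (Fin n → ℝ) × (Fin n → ℝ) => ∫ p, F (w, p))
      (volume.prod volume) := hFP.integral_prod_left
  calc ∫ x : Fin n → ℝ, weyl hbar n (⇑a) (⇑ψ) x * (starRingEnd ℂ) (φ x)
      = ∫ x, ∫ y, ∫ p, F ((x, y), p) := by simp only [hL]
    _ = ∫ w : (Fin n → ℝ) × (Fin n → ℝ), (∫ p, F (w, p)) ∂(volume.prod volume) :=
        (integral_prod _ hIpl).symm
    _ = ∫ q, F q ∂((volume.prod volume).prod volume) := (integral_prod F hFP).symm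
    _ = ∫ q, F (WeylPairingAux.fullEquiv n q) ∂((volume.prod volume).prod volume) :=
        (hmΦ.integral_comp' F).symm
    _ = ∫ q, G q ∂((volume.prod volume).prod volume) :=
        integral_congr_ae (ae_of_all _ hFG)
    _ = ∫ w : (Fin n → ℝ) × (Fin n → ℝ), (∫ v, G (w, v)) ∂(volume.prod volume) :=
        integral_prod G hGP
    _ = ∫ w : (Fin n → ℝ) × (Fin n → ℝ),
          a (Sum.elim w.1 w.2) * crossWigner hbar n (⇑ψ) (⇑φ) w.1 w.2
          ∂(volume.prod volume) := by
        refine integral_congr_ae (ae_of_all _ fun w => ?_)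
        exact (hG w).symm
    _ = ∫ z : (Fin n ⊕ Fin n) → ℝ, a z * crossWignerZ hbar n (⇑ψ) (⇑φ) z := by
        have hs := volume_measurePreserving_sumPiEquivProdPi_symm
          (fun _ : Fin n ⊕ Fin n => ℝ)
        have h := hs.integral_comp'
          (fun z => a z * crossWignerZ hbar n (⇑ψ) (⇑φ) z)
        refine Eq.trans ?_ h
        rfl


end
end

section
/- Let G be a real symmetric positive definite 2n×2n matrix and let Ω_G = {z ∈ ℝ²ⁿ : G z·z ≤ 1}. Then Ω_G is a symplectic ball if and only if there exists λ > 0 such that λG is symplectic. -/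
open MeasureTheory Matrix

noncomputable section

open scoped MatrixOrder

section SympAux
variable {n : ℕ}

lemma stdJ_mul_stdJ : stdJ n * stdJ n = -1 := by
  rw [stdJ, Matrix.fromBlocks_multiply, ← Matrix.fromBlocks_one (l := Fin n) (m := Fin n),
    Matrix.fromBlocks_neg]
  congr 1 <;> simp

lemma stdJ_transpose : (stdJ n)ᵀ = -stdJ n := by
  rw [stdJ, Matrix.fromBlocks_transpose, Matrix.fromBlocks_neg]
  congr 1 <;> simp

lemma stdJ_mul_neg_stdJ : stdJ n * (-stdJ n) = 1 := by
  rw [mul_neg, stdJ_mul_stdJ, neg_neg]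

lemma neg_stdJ_mul_stdJ : (-stdJ n) * stdJ n = 1 := by
  rw [neg_mul, stdJ_mul_stdJ, neg_neg]

lemma stdJ_inv : (stdJ n)⁻¹ = -stdJ n :=
  Matrix.inv_eq_right_inv stdJ_mul_neg_stdJ

lemma isUnit_stdJ_det : IsUnit (stdJ n).det :=
  (Matrix.isUnit_iff_isUnit_det _).mp
    ⟨⟨stdJ n, -stdJ n, stdJ_mul_neg_stdJ, neg_stdJ_mul_stdJ⟩, rfl⟩

/-- symplectic predicate -/
def Symp (S : Matrix (Fin n ⊕ Fin n) (Fin n ⊕ Fin n) ℝ) : Prop :=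
  Sᵀ * stdJ n * S = stdJ n

lemma Symp.isUnit_det {S : Matrix (Fin n ⊕ Fin n) (Fin n ⊕ Fin n) ℝ}
    (h : Symp S) : IsUnit S.det := by
  have hd := congrArg Matrix.det h
  rw [Matrix.det_mul, Matrix.det_mul, Matrix.det_transpose] at hd
  have h1 : (stdJ n).det ≠ 0 := isUnit_stdJ_det.ne_zero
  have hdet : S.det * S.det = 1 :=
    mul_right_cancel₀ h1 (by linear_combination hd)
  exact IsUnit.of_mul_eq_one _ hdet

lemma Symp.inv {S : Matrix (Fin n ⊕ Fin n) (Fin n ⊕ Fin n) ℝ}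
    (h : Symp S) : Symp S⁻¹ := by
  have hdet := h.isUnit_det
  have hdetT : IsUnit Sᵀ.det := by rwa [Matrix.det_transpose]
  unfold Symp at h ⊢
  rw [Matrix.transpose_nonsing_inv]
  calc (Sᵀ)⁻¹ * stdJ n * S⁻¹ = (Sᵀ)⁻¹ * (Sᵀ * stdJ n * S) * S⁻¹ := by rw [h]
    _ = stdJ n := by
        rw [Matrix.mul_assoc Sᵀ, Matrix.nonsing_inv_mul_cancel_left _ _ hdetT,
          Matrix.mul_nonsing_inv_cancel_right _ _ hdet]

lemma Symp.transpose {S : Matrix (Fin n ⊕ Fin n) (Fin n ⊕ Fin n) ℝ}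
    (h : Symp S) : Symp Sᵀ := by
  have hdet := h.isUnit_det
  have hdetT : IsUnit Sᵀ.det := by rwa [Matrix.det_transpose]
  have hinv := congrArg (·⁻¹) h
  simp only [Matrix.mul_inv_rev] at hinv
  rw [stdJ_inv] at hinv
  -- hinv : S⁻¹ * ((stdJ n)⁻¹ * (Sᵀ)⁻¹)? check shape
  unfold Symp
  rw [Matrix.transpose_transpose]
  have h2 : S⁻¹ * (-stdJ n) * (Sᵀ)⁻¹ = -stdJ n := by
    simp only [← Matrix.mul_assoc] at hinv
    exact hinv
  have h3 : S⁻¹ * stdJ n * (Sᵀ)⁻¹ = stdJ n := by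
    have := congrArg Neg.neg h2
    simpa [mul_neg, neg_mul, Matrix.neg_mul, Matrix.mul_neg] using this
  calc S * stdJ n * Sᵀ = S * (S⁻¹ * stdJ n * (Sᵀ)⁻¹) * Sᵀ := by rw [h3]
    _ = stdJ n := by
        simp only [Matrix.mul_assoc]
        rw [Matrix.nonsing_inv_mul _ hdetT, Matrix.mul_one,
          Matrix.mul_nonsing_inv_cancel_left _ _ hdet]

lemma Symp.mul {S T : Matrix (Fin n ⊕ Fin n) (Fin n ⊕ Fin n) ℝ}
    (hS : Symp S) (hT : Symp T) : Symp (S * T) := by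
  unfold Symp at *
  rw [Matrix.transpose_mul]
  calc Tᵀ * Sᵀ * (stdJ n) * (S * T) = Tᵀ * (Sᵀ * stdJ n * S) * T := by
        simp only [Matrix.mul_assoc]
    _ = stdJ n := by rw [hS, hT]

section quad
variable {I : Type*} [Fintype I] [DecidableEq I]

lemma posdef_dot (A : Matrix I I ℝ) (hA : A.PosDef) {z : I → ℝ} (hz : z ≠ 0) :
    0 < A.mulVec z ⬝ᵥ z := by
  have := hA.dotProduct_mulVec_pos hz
  simpa [dotProduct_comm] using this

lemma qf_le (A B : Matrix I I ℝ) (hA : A.PosDef)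
    (h : ∀ z : I → ℝ, A.mulVec z ⬝ᵥ z ≤ 1 → B.mulVec z ⬝ᵥ z ≤ 1) :
    ∀ z : I → ℝ, B.mulVec z ⬝ᵥ z ≤ A.mulVec z ⬝ᵥ z := by
  intro z
  rcases eq_or_ne z 0 with rfl | hz
  · simp
  · set a := A.mulVec z ⬝ᵥ z with ha
    have hapos : 0 < a := posdef_dot A hA hz
    set t := Real.sqrt a⁻¹ with ht
    have ht2 : t ^ 2 = a⁻¹ := Real.sq_sqrt (by positivity)
    have key : ∀ C : Matrix I I ℝ, C.mulVec (t • z) ⬝ᵥ (t • z) = a⁻¹ * (C.mulVec z ⬝ᵥ z) := by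
      intro C
      rw [Matrix.mulVec_smul, smul_dotProduct, dotProduct_smul,
        smul_eq_mul, smul_eq_mul, ← ht2]
      ring
    have h1 : A.mulVec (t • z) ⬝ᵥ (t • z) ≤ 1 := by
      rw [key A, ← ha, inv_mul_cancel₀ hapos.ne']
    have h2 := h _ h1
    rw [key B] at h2
    calc B.mulVec z ⬝ᵥ z = a * (a⁻¹ * (B.mulVec z ⬝ᵥ z)) := by
          field_simp
      _ ≤ a * 1 := by exact mul_le_mul_of_nonneg_left h2 hapos.le
      _ = a := mul_one a

lemma matrix_eq_of_qf (A B : Matrix I I ℝ) (hAs : Aᵀ = A) (hBs : Bᵀ = B)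
    (h : ∀ z : I → ℝ, A.mulVec z ⬝ᵥ z = B.mulVec z ⬝ᵥ z) : A = B := by
  have key : ∀ (i j : I), A i j + A j i = B i j + B j i := by
    intro i j
    have h1 := h (Pi.single i 1 + Pi.single j 1)
    have h2 := h (Pi.single i 1)
    have h3 := h (Pi.single j 1)
    simp only [Matrix.mulVec_add, add_dotProduct, dotProduct_add] at h1
    have e : ∀ (C : Matrix I I ℝ) (k l : I),
        C.mulVec (Pi.single k 1) ⬝ᵥ (Pi.single l 1) = C l k := by
      intro C k l
      simp [Matrix.mulVec_single, dotProduct, Pi.single_apply]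
    simp only [e] at h1 h2 h3
    linarith
  ext i j
  have h1 := key i j
  have hA : A j i = A i j := by nth_rewrite 2 [← hAs]; exact (Matrix.transpose_apply A i j).symm
  have hB : B j i = B i j := by nth_rewrite 2 [← hBs]; exact (Matrix.transpose_apply B i j).symm
  rw [hA, hB] at h1
  linarith

lemma ellipsoid_unique (A B : Matrix I I ℝ) (hA : A.PosDef) (hB : B.PosDef)
    (h : ∀ z : I → ℝ, A.mulVec z ⬝ᵥ z ≤ 1 ↔ B.mulVec z ⬝ᵥ z ≤ 1) : A = B := by
  have hAT : Aᵀ = A := by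
    have := hA.1; rwa [Matrix.IsHermitian, Matrix.conjTranspose_eq_transpose_of_trivial] at this
  have hBT : Bᵀ = B := by
    have := hB.1; rwa [Matrix.IsHermitian, Matrix.conjTranspose_eq_transpose_of_trivial] at this
  apply matrix_eq_of_qf A B hAT hBT
  intro z
  have h1 := qf_le A B hA (fun z hz => (h z).mp hz) z
  have h2 := qf_le B A hB (fun z hz => (h z).mpr hz) z
  linarith
end quad

lemma transpose_eq_of_hermitian {I : Type*} [Fintype I] {A : Matrix I I ℝ}
    (h : A.IsHermitian) : Aᵀ = A := by
  rwa [Matrix.IsHermitian, Matrix.conjTranspose_eq_transpose_of_trivial] at h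

section pd
variable {I : Type*} [Fintype I] [DecidableEq I]

lemma posdef_smul_s13 {A : Matrix I I ℝ} (hA : A.PosDef) {c : ℝ} (hc : 0 < c) :
    (c • A).PosDef := by
  refine Matrix.PosDef.of_dotProduct_mulVec_pos ?_ fun x hx => ?_
  · rw [Matrix.IsHermitian, Matrix.conjTranspose_eq_transpose_of_trivial,
      Matrix.transpose_smul, transpose_eq_of_hermitian hA.1]
  · rw [Matrix.smul_mulVec, dotProduct_smul, smul_eq_mul]
    exact mul_pos hc (hA.dotProduct_mulVec_pos hx)

lemma posdef_of_posSemidef_isUnit {A : Matrix I I ℝ} (hA : A.PosSemidef)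
    (hdet : IsUnit A.det) : A.PosDef := by
  refine Matrix.PosDef.of_dotProduct_mulVec_pos hA.1 fun x hx => lt_of_le_of_ne (hA.dotProduct_mulVec_nonneg x) (Ne.symm fun h0 => hx ?_)
  have h1 := (hA.dotProduct_mulVec_zero_iff x).mp h0
  have h2 := Matrix.mulVec_injective_iff_isUnit.mpr ((Matrix.isUnit_iff_isUnit_det _).mpr hdet)
  have := h2 (a₁ := x) (a₂ := 0) (by rw [h1, Matrix.mulVec_zero])
  exact this

lemma posdef_transpose_mul_self {T : Matrix I I ℝ} (hT : IsUnit T.det) :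
    (Tᵀ * T).PosDef := by
  refine posdef_of_posSemidef_isUnit ?_ ?_
  · have := Matrix.posSemidef_conjTranspose_mul_self T
    rwa [Matrix.conjTranspose_eq_transpose_of_trivial] at this
  · rw [Matrix.det_mul, Matrix.det_transpose]
    exact hT.mul hT
end pd

lemma sqrt_symp {M : Matrix (Fin n ⊕ Fin n) (Fin n ⊕ Fin n) ℝ} (hM : M.PosDef)
    (hs : Symp M) : Symp (CFC.sqrt M) := by
  set S := CFC.sqrt M with hSdef
  have hSS : S * S = M := CFC.sqrt_mul_sqrt_self M hM.posSemidef.nonneg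
  have hSps : S.PosSemidef := (CFC.sqrt_nonneg M).posSemidef
  have hST : Sᵀ = S := transpose_eq_of_hermitian hSps.1
  have hMdet : IsUnit M.det := hM.det_pos.ne'.isUnit
  have hSdet : IsUnit S.det := by
    have : S.det * S.det = M.det := by rw [← Matrix.det_mul, hSS]
    rcases hMdet with ⟨u, hu⟩
    refine isUnit_iff_ne_zero.mpr fun h0 => ?_
    rw [h0, mul_zero] at this
    exact hM.det_pos.ne' this.symm
  have hSpd : S.PosDef := posdef_of_posSemidef_isUnit hSps hSdet
  have hMT : Mᵀ = M := transpose_eq_of_hermitian hM.1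
  have hMJM : M * stdJ n * M = stdJ n := by rwa [Symp, hMT] at hs
  -- M * J = J * M⁻¹
  have hMJ : M * stdJ n = stdJ n * M⁻¹ := by
    have := congrArg (· * M⁻¹) hMJM
    simpa [Matrix.mul_nonsing_inv_cancel_right _ _ hMdet] using this
  set T := (-stdJ n) * S⁻¹ * stdJ n with hTdef
  have hTps : T.PosSemidef := by
    have hJc : (-stdJ n)ᴴ = stdJ n := by
      rw [Matrix.conjTranspose_eq_transpose_of_trivial, Matrix.transpose_neg, stdJ_transpose,
        neg_neg]
    have := (hSpd.inv.posSemidef).mul_mul_conjTranspose_same (-stdJ n)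
    rw [hJc] at this
    exact this
  have hinv2 : S⁻¹ * S⁻¹ = M⁻¹ := by rw [← Matrix.mul_inv_rev, hSS]
  have hTT : T * T = M := by
    calc T * T = (-stdJ n) * S⁻¹ * (stdJ n * (-stdJ n)) * S⁻¹ * stdJ n := by
          simp only [hTdef, Matrix.mul_assoc]
      _ = (-stdJ n) * (S⁻¹ * S⁻¹) * stdJ n := by
          rw [stdJ_mul_neg_stdJ]
          simp only [Matrix.mul_one, Matrix.mul_assoc]
      _ = -(stdJ n * M⁻¹ * stdJ n) := by
          rw [hinv2]; simp only [Matrix.neg_mul, Matrix.mul_assoc]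
      _ = -(M * stdJ n * stdJ n) := by rw [← hMJ]
      _ = M := by
          rw [Matrix.mul_assoc, stdJ_mul_stdJ]
          simp
  have hTS : T = S := (CFC.sq_eq_sq_iff T S hTps.nonneg hSps.nonneg).mp (by rw [pow_two, pow_two, hTT, hSS])
  -- conclude
  have hJS : stdJ n * S = S⁻¹ * stdJ n := by
    conv_lhs => rw [← hTS]
    rw [hTdef, ← Matrix.mul_assoc, ← Matrix.mul_assoc, stdJ_mul_neg_stdJ, Matrix.one_mul]
  rw [Symp, hST, Matrix.mul_assoc, hJS, ← Matrix.mul_assoc,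
    Matrix.mul_nonsing_inv _ hSdet, Matrix.one_mul]

lemma dot_self_eq_norm_sq (w : EuclideanSpace ℝ (Fin n ⊕ Fin n)) :
    (w : (Fin n ⊕ Fin n) → ℝ) ⬝ᵥ w = ‖w‖ ^ 2 := by
  rw [EuclideanSpace.norm_eq, Real.sq_sqrt (by positivity)]
  refine Finset.sum_congr rfl fun i _ => ?_
  rw [Real.norm_eq_abs, sq_abs, sq]

lemma dot_self_transpose (T : Matrix (Fin n ⊕ Fin n) (Fin n ⊕ Fin n) ℝ)
    (z : (Fin n ⊕ Fin n) → ℝ) :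
    (T *ᵥ z) ⬝ᵥ (T *ᵥ z) = ((Tᵀ * T) *ᵥ z) ⬝ᵥ z := by
  rw [← Matrix.mulVec_mulVec, Matrix.mulVec_transpose, ← Matrix.dotProduct_mulVec,
    dotProduct_comm]

lemma image_ball (S : Matrix (Fin n ⊕ Fin n) (Fin n ⊕ Fin n) ℝ) (hS : IsUnit S.det)
    (r : ℝ) (hr : 0 ≤ r) :
    ((fun z : EuclideanSpace ℝ (Fin n ⊕ Fin n) =>
        (WithLp.toLp 2 (S.mulVec z) : EuclideanSpace ℝ (Fin n ⊕ Fin n))) '' Metric.closedBall 0 r)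
      = {z : EuclideanSpace ℝ (Fin n ⊕ Fin n) |
          (S⁻¹ *ᵥ (z : (Fin n ⊕ Fin n) → ℝ)) ⬝ᵥ (S⁻¹ *ᵥ z) ≤ r ^ 2} := by
  ext z
  constructor
  · rintro ⟨w, hw, rfl⟩
    show (S⁻¹ *ᵥ (S *ᵥ (w : (Fin n ⊕ Fin n) → ℝ))) ⬝ᵥ (S⁻¹ *ᵥ (S *ᵥ w)) ≤ r ^ 2
    rw [Matrix.mulVec_mulVec, Matrix.nonsing_inv_mul _ hS, Matrix.one_mulVec]
    have hw' : ‖w‖ ≤ r := by simpa using Metric.mem_closedBall.mp hw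
    calc (w : (Fin n ⊕ Fin n) → ℝ) ⬝ᵥ w = ‖w‖ ^ 2 := dot_self_eq_norm_sq w
      _ ≤ r ^ 2 := pow_le_pow_left₀ (norm_nonneg w) hw' 2
  · intro hz
    have hz' : (S⁻¹ *ᵥ (z : (Fin n ⊕ Fin n) → ℝ)) ⬝ᵥ (S⁻¹ *ᵥ z) ≤ r ^ 2 := hz
    set w : EuclideanSpace ℝ (Fin n ⊕ Fin n) := WithLp.toLp 2 (S⁻¹ *ᵥ (z : (Fin n ⊕ Fin n) → ℝ)) with hwdef
    refine ⟨w, ?_, ?_⟩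
    · rw [Metric.mem_closedBall, dist_zero_right]
      have h2 : ‖w‖ ^ 2 ≤ r ^ 2 := by rw [← dot_self_eq_norm_sq w]; exact hz'
      nlinarith [norm_nonneg w]
    · show WithLp.toLp 2 (S *ᵥ (S⁻¹ *ᵥ (z : (Fin n ⊕ Fin n) → ℝ))) = z
      rw [Matrix.mulVec_mulVec, Matrix.mul_nonsing_inv _ hS, Matrix.one_mulVec]

end SympAux

/-- The ellipsoid `Ω_G = {z : G z·z ≤ 1}` (`G` symmetric positive definite) is
a symplectic ball iff `λG` is symplectic for some `λ > 0`. -/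
theorem ellipsoid_isSymplecticBall_iff (n : ℕ)
    (G : Matrix (Fin n ⊕ Fin n) (Fin n ⊕ Fin n) ℝ) (hGs : G.IsSymm) (hG : G.PosDef) :
    IsSymplecticBall n {z : EuclideanSpace ℝ (Fin n ⊕ Fin n) | G.mulVec z ⬝ᵥ z ≤ 1} ↔
      ∃ lam : ℝ, 0 < lam ∧ (lam • G)ᵀ * stdJ n * (lam • G) = stdJ n := by
  constructor
  · rintro ⟨S, r, hr, hS, hset⟩
    have hSsymp : Symp S := hS
    have hSdet : IsUnit S.det := hSsymp.isUnit_det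
    have hSidet : IsUnit S⁻¹.det := Matrix.isUnit_nonsing_inv_det _ hSdet
    -- the matrix of the image ellipsoid
    set A : Matrix (Fin n ⊕ Fin n) (Fin n ⊕ Fin n) ℝ := (r ^ 2)⁻¹ • ((S⁻¹)ᵀ * S⁻¹) with hAdef
    have hApd : A.PosDef :=
      posdef_smul_s13 (posdef_transpose_mul_self hSidet) (by positivity)
    have hiff : ∀ z : (Fin n ⊕ Fin n) → ℝ, G.mulVec z ⬝ᵥ z ≤ 1 ↔ A.mulVec z ⬝ᵥ z ≤ 1 := by
      intro z
      have hmem := Set.ext_iff.mp (hset.trans (image_ball S hSdet r hr.le)) (WithLp.toLp 2 z)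
      simp only [Set.mem_setOf_eq, WithLp.ofLp_toLp] at hmem
      rw [hmem, dot_self_transpose]
      rw [hAdef]
      rw [Matrix.smul_mulVec, smul_dotProduct, smul_eq_mul]
      have hr2 : (0 : ℝ) < r ^ 2 := by positivity
      rw [inv_mul_le_iff₀ hr2, mul_one]
    have hGA : G = A := ellipsoid_unique G A hG hApd hiff
    refine ⟨r ^ 2, by positivity, ?_⟩
    have hlG : (r ^ 2) • G = (S⁻¹)ᵀ * S⁻¹ := by
      rw [hGA, hAdef, smul_smul, mul_inv_cancel₀ (by positivity : (r:ℝ) ^ 2 ≠ 0), one_smul]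
    rw [hlG]
    exact (hSsymp.inv.transpose).mul hSsymp.inv
  · rintro ⟨lam, hlam, hsymp⟩
    set M : Matrix (Fin n ⊕ Fin n) (Fin n ⊕ Fin n) ℝ := lam • G with hMdef
    have hMpd : M.PosDef := posdef_smul_s13 hG hlam
    have hMsymp : Symp M := hsymp
    set R : Matrix (Fin n ⊕ Fin n) (Fin n ⊕ Fin n) ℝ := CFC.sqrt M with hRdef
    have hRsymp : Symp R := sqrt_symp hMpd hMsymp
    have hRdet : IsUnit R.det := hRsymp.isUnit_det
    have hRR : R * R = M := CFC.sqrt_mul_sqrt_self M hMpd.posSemidef.nonneg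
    have hRT : Rᵀ = R := transpose_eq_of_hermitian (CFC.sqrt_nonneg M).posSemidef.1
    refine ⟨R⁻¹, Real.sqrt lam, Real.sqrt_pos.mpr hlam, hRsymp.inv, ?_⟩
    rw [image_ball _ (Matrix.isUnit_nonsing_inv_det _ hRdet) _ (Real.sqrt_nonneg _),
      Matrix.nonsing_inv_nonsing_inv _ hRdet]
    ext z
    simp only [Set.mem_setOf_eq]
    rw [dot_self_transpose, hRT, hRR, Real.sq_sqrt hlam.le, hMdef,
      Matrix.smul_mulVec, smul_dotProduct, smul_eq_mul]
    constructor
    · intro h; nlinarith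
    · intro h; nlinarith


end
end

section
/- Let a and b be Schwartz functions on ℝ²ⁿ. If Â_a ψ = Â_b ψ for every Schwartz function ψ on ℝⁿ, then a = b. (The Weyl correspondence is one-to-one on Schwartz symbols.) -/
open MeasureTheory Matrix

noncomputable section

section WeylAuxSection

open MeasureTheory Matrix SchwartzMap FourierTransform Real
open scoped ContDiff


namespace WeylAux

variable {n : ℕ}

lemma norm_le_norm_elim (q p : Fin n → ℝ) : ‖p‖ ≤ ‖Sum.elim q p‖ := by
  rw [pi_norm_le_iff_of_nonneg (norm_nonneg _)]
  intro i
  exact norm_le_pi_norm (Sum.elim q p) (Sum.inr i)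

lemma decay_bound {E : Type*} [NormedAddCommGroup E] [NormedSpace ℝ E] (f : 𝓢(E, ℂ)) (k : ℕ) :
    ∃ C : ℝ, 0 ≤ C ∧ ∀ x, ‖f x‖ ≤ C * ((1 + ‖x‖)⁻¹) ^ k := by
  refine ⟨2 ^ k * (Finset.Iic (k, 0)).sup (fun m => SchwartzMap.seminorm ℝ m.1 m.2) f,
    mul_nonneg (by positivity) (apply_nonneg _ _), fun x => ?_⟩
  have h := one_add_le_sup_seminorm_apply (𝕜 := ℝ) (m := (k, 0)) le_rfl le_rfl f x
  rw [norm_iteratedFDeriv_zero] at h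
  have hpos : (0:ℝ) < (1 + ‖x‖) ^ k := by positivity
  rw [inv_pow, ← div_eq_mul_inv, le_div_iff₀ hpos]
  calc ‖f x‖ * (1 + ‖x‖) ^ k = (1 + ‖x‖) ^ k * ‖f x‖ := by ring
  _ ≤ _ := h

lemma integrable_bound (n : ℕ) :
    Integrable (fun p : Fin n → ℝ => ((1 + ‖p‖)⁻¹) ^ (n + 1)) := by
  have h : ((Module.finrank ℝ (Fin n → ℝ) : ℝ)) < ((n : ℝ) + 1) := by
    rw [Module.finrank_fintype_fun_eq_card]
    simp
  have H := integrable_one_add_norm (E := Fin n → ℝ) (μ := volume) h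
  refine H.congr (ae_of_all _ fun x => ?_)
  simp only
  rw [Real.rpow_neg (by positivity), inv_pow]
  congr 1
  rw [← Real.rpow_natCast]
  norm_num

end WeylAux

namespace WeylAux

lemma norm_phase (hb r : ℝ) : ‖Complex.exp (Complex.I * (r : ℂ) / (hb : ℂ))‖ = 1 := by
  have h : Complex.I * (r : ℂ) / (hb : ℂ) = ((r / hb : ℝ) : ℂ) * Complex.I := by
    push_cast; ring
  rw [h, Complex.norm_exp_ofReal_mul_I]

lemma continuous_elim (q : Fin n → ℝ) : Continuous fun p : Fin n → ℝ => Sum.elim q p :=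
  continuous_pi fun i => by
    cases i with
    | inl j => exact continuous_const
    | inr j => exact continuous_apply j

lemma continuous_dot (u : Fin n → ℝ) : Continuous fun p : Fin n → ℝ => p ⬝ᵥ u := by
  simp only [dotProduct]
  exact continuous_finset_sum _ fun i _ => (continuous_apply i).mul continuous_const

lemma integrable_phase_mul (f : 𝓢(((Fin n ⊕ Fin n) → ℝ), ℂ)) (hb : ℝ) (q u : Fin n → ℝ) :
    Integrable (fun p : Fin n → ℝ =>
      Complex.exp (Complex.I * ((p ⬝ᵥ u : ℝ) : ℂ) / (hb : ℂ)) * f (Sum.elim q p)) := by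
  obtain ⟨C, hC0, hC⟩ := decay_bound f (n + 1)
  have hcont : Continuous (fun p : Fin n → ℝ =>
      Complex.exp (Complex.I * ((p ⬝ᵥ u : ℝ) : ℂ) / (hb : ℂ)) * f (Sum.elim q p)) := by
    refine Continuous.mul ?_ (f.continuous.comp (continuous_elim q))
    exact Complex.continuous_exp.comp
      (((continuous_const.mul (Complex.continuous_ofReal.comp (continuous_dot u)))).div_const _)
  refine ((integrable_bound n).const_mul C).mono' hcont.aestronglyMeasurable
    (ae_of_all _ fun p => ?_)
  rw [norm_mul, norm_phase, one_mul]
  calc ‖f (Sum.elim q p)‖ ≤ C * ((1 + ‖Sum.elim q p‖)⁻¹) ^ (n + 1) := hC _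
  _ ≤ C * ((1 + ‖p‖)⁻¹) ^ (n + 1) := by
      refine mul_le_mul_of_nonneg_left ?_ hC0
      refine pow_le_pow_left₀ (by positivity) ?_ _
      refine inv_anti₀ (by positivity) ?_
      linarith [norm_le_norm_elim q p]

end WeylAux

namespace WeylAux

lemma norm_integrand_le (f : 𝓢(((Fin n ⊕ Fin n) → ℝ), ℂ)) {C : ℝ} (hC0 : 0 ≤ C)
    (hC : ∀ z, ‖f z‖ ≤ C * ((1 + ‖z‖)⁻¹) ^ (n + 1)) (hb : ℝ) (q u p : Fin n → ℝ) :
    ‖Complex.exp (Complex.I * ((p ⬝ᵥ u : ℝ) : ℂ) / (hb : ℂ)) * f (Sum.elim q p)‖ ≤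
      C * ((1 + ‖p‖)⁻¹) ^ (n + 1) := by
  rw [norm_mul, norm_phase, one_mul]
  calc ‖f (Sum.elim q p)‖ ≤ C * ((1 + ‖Sum.elim q p‖)⁻¹) ^ (n + 1) := hC _
  _ ≤ C * ((1 + ‖p‖)⁻¹) ^ (n + 1) := by
      refine mul_le_mul_of_nonneg_left ?_ hC0
      refine pow_le_pow_left₀ (by positivity) ?_ _
      refine inv_anti₀ (by positivity) ?_
      linarith [norm_le_norm_elim q p]

lemma weylKernel_sub (hb : ℝ) (f g : 𝓢(((Fin n ⊕ Fin n) → ℝ), ℂ)) (x y : Fin n → ℝ) :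
    weylKernel hb n (⇑(f - g)) x y = weylKernel hb n (⇑f) x y - weylKernel hb n (⇑g) x y := by
  unfold weylKernel
  rw [← mul_sub, ← integral_sub (integrable_phase_mul f hb _ _) (integrable_phase_mul g hb _ _)]
  congr 1
  refine integral_congr_ae (ae_of_all _ fun p => ?_)
  simp [SchwartzMap.sub_apply, mul_sub]

lemma weylKernel_bound (hb : ℝ) (f : 𝓢(((Fin n ⊕ Fin n) → ℝ), ℂ)) (x : Fin n → ℝ) :
    ∃ M : ℝ, 0 ≤ M ∧ ∀ y, ‖weylKernel hb n (⇑f) x y‖ ≤ M := by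
  obtain ⟨C, hC0, hC⟩ := decay_bound f (n + 1)
  have hint : 0 ≤ ∫ p : Fin n → ℝ, C * ((1 + ‖p‖)⁻¹) ^ (n + 1) :=
    integral_nonneg fun p => by positivity
  refine ⟨‖(((2 * Real.pi * hb)⁻¹ ^ n : ℝ) : ℂ)‖ * ∫ p : Fin n → ℝ, C * ((1 + ‖p‖)⁻¹) ^ (n + 1),
    mul_nonneg (norm_nonneg _) hint, fun y => ?_⟩
  unfold weylKernel
  rw [norm_mul]
  refine mul_le_mul_of_nonneg_left ?_ (norm_nonneg _)
  calc ‖∫ p : Fin n → ℝ, Complex.exp (Complex.I * ((p ⬝ᵥ (x - y) : ℝ) : ℂ) / (hb : ℂ)) *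
        f (Sum.elim ((2 : ℝ)⁻¹ • (x + y)) p)‖
      ≤ ∫ p : Fin n → ℝ, ‖Complex.exp (Complex.I * ((p ⬝ᵥ (x - y) : ℝ) : ℂ) / (hb : ℂ)) *
        f (Sum.elim ((2 : ℝ)⁻¹ • (x + y)) p)‖ := norm_integral_le_integral_norm _
  _ ≤ ∫ p : Fin n → ℝ, C * ((1 + ‖p‖)⁻¹) ^ (n + 1) := by
      refine integral_mono (integrable_phase_mul f hb _ _).norm
        ((integrable_bound n).const_mul C) fun p => ?_
      exact norm_integrand_le f hC0 hC hb _ _ p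

lemma continuous_dot' (x p : Fin n → ℝ) : Continuous fun y : Fin n → ℝ => p ⬝ᵥ (x - y) := by
  simp only [dotProduct]
  refine continuous_finset_sum _ fun i _ => Continuous.mul continuous_const ?_
  exact Continuous.sub continuous_const (continuous_apply i)

lemma continuous_elim' (x : Fin n → ℝ) (p : Fin n → ℝ) :
    Continuous fun y : Fin n → ℝ => Sum.elim ((2 : ℝ)⁻¹ • (x + y)) p :=
  continuous_pi fun i => by
    cases i with
    | inl j =>
        show Continuous fun y : Fin n → ℝ => (2 : ℝ)⁻¹ * (x j + y j)
        exact continuous_const.mul (continuous_const.add (continuous_apply j))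
    | inr j => exact continuous_const

lemma weylKernel_continuous (hb : ℝ) (f : 𝓢(((Fin n ⊕ Fin n) → ℝ), ℂ)) (x : Fin n → ℝ) :
    Continuous fun y => weylKernel hb n (⇑f) x y := by
  unfold weylKernel
  refine continuous_const.mul ?_
  obtain ⟨C, hC0, hC⟩ := decay_bound f (n + 1)
  refine continuous_of_dominated (bound := fun p => C * ((1 + ‖p‖)⁻¹) ^ (n + 1))
    (fun y => (integrable_phase_mul f hb _ _).aestronglyMeasurable)
    (fun y => ae_of_all _ fun p => norm_integrand_le f hC0 hC hb _ _ p)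
    ((integrable_bound n).const_mul C)
    (ae_of_all _ fun p => ?_)
  refine Continuous.mul ?_ (f.continuous.comp (continuous_elim' x p))
  exact Complex.continuous_exp.comp
    ((continuous_const.mul (Complex.continuous_ofReal.comp (continuous_dot' x p))).div_const _)

lemma kernel_mul_integrable (hb : ℝ) (f : 𝓢(((Fin n ⊕ Fin n) → ℝ), ℂ))
    (ψ : 𝓢((Fin n → ℝ), ℂ)) (x : Fin n → ℝ) :
    Integrable fun y => weylKernel hb n (⇑f) x y * ψ y := by
  obtain ⟨M, hM0, hM⟩ := weylKernel_bound hb f x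
  refine (ψ.integrable.norm.const_mul M).mono'
    (((weylKernel_continuous hb f x).mul ψ.continuous).aestronglyMeasurable)
    (ae_of_all _ fun y => ?_)
  rw [norm_mul]
  exact mul_le_mul_of_nonneg_right (hM y) (norm_nonneg _)

end WeylAux

namespace WeylAux

def ofCompactSupport {E : Type*} [NormedAddCommGroup E] [NormedSpace ℝ E] (g : E → ℝ)
    (hg : ContDiff ℝ ∞ g) (hsupp : HasCompactSupport g) : 𝓢(E, ℂ) where
  toFun := fun x => (g x : ℂ)
  smooth' := Complex.ofRealCLM.contDiff.comp hg
  decay' := by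
    intro k m
    have heq : ∀ x, ‖iteratedFDeriv ℝ m (fun x => (g x : ℂ)) x‖ = ‖iteratedFDeriv ℝ m g x‖ :=
      fun x => Complex.ofRealLI.norm_iteratedFDeriv_comp_left hg.contDiffAt (by exact_mod_cast le_top)
    have hcont : Continuous fun x => ‖x‖ ^ k * ‖iteratedFDeriv ℝ m g x‖ :=
      (continuous_norm.pow k).mul (hg.continuous_iteratedFDeriv (by exact_mod_cast le_top)).norm
    have hcs : HasCompactSupport fun x => ‖x‖ ^ k * ‖iteratedFDeriv ℝ m g x‖ := by
      apply HasCompactSupport.mul_left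
      exact (hsupp.iteratedFDeriv m).norm
    obtain ⟨C, hC⟩ := hcont.bounded_above_of_compact_support hcs
    refine ⟨C, fun x => ?_⟩
    rw [heq]
    calc ‖x‖ ^ k * ‖iteratedFDeriv ℝ m g x‖ ≤ ‖‖x‖ ^ k * ‖iteratedFDeriv ℝ m g x‖‖ :=
      le_abs_self _
    _ ≤ C := hC x

@[simp] lemma ofCompactSupport_apply {E : Type*} [NormedAddCommGroup E] [NormedSpace ℝ E]
    (g : E → ℝ) (hg : ContDiff ℝ ∞ g) (hsupp : HasCompactSupport g) (x : E) :
    ofCompactSupport g hg hsupp x = (g x : ℂ) := rfl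

end WeylAux

namespace WeylAux

open scoped RealInnerProductSpace

lemma kernel_eq_zero (hb : ℝ) (c : 𝓢(((Fin n ⊕ Fin n) → ℝ), ℂ))
    (h0 : ∀ ψ : 𝓢((Fin n → ℝ), ℂ), ∀ x, (∫ y, weylKernel hb n (⇑c) x y * ψ y) = 0)
    (x y : Fin n → ℝ) : weylKernel hb n (⇑c) x y = 0 := by
  have hcont := weylKernel_continuous hb c x
  have hae : ∀ᵐ y' ∂(volume : Measure (Fin n → ℝ)), weylKernel hb n (⇑c) x y' = 0 := by
    apply ae_eq_zero_of_integral_contDiff_smul_eq_zero hcont.locallyIntegrable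
    intro g gsmooth gsupp
    have h1 := h0 (ofCompactSupport g gsmooth gsupp) x
    rw [← h1]
    refine integral_congr_ae (ae_of_all _ fun y' => ?_)
    simp only [ofCompactSupport_apply, Complex.real_smul]
    ring
  have heq : (fun y' => weylKernel hb n (⇑c) x y') = fun _ => (0 : ℂ) :=
    (Continuous.ae_eq_iff_eq volume hcont continuous_const).mp hae
  exact congrFun heq y

lemma integral_phase_eq_zero (hb : ℝ) (hhb : 0 < hb) (c : 𝓢(((Fin n ⊕ Fin n) → ℝ), ℂ))
    (hker : ∀ q u : Fin n → ℝ, (∫ p : Fin n → ℝ,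
      Complex.exp (Complex.I * ((p ⬝ᵥ u : ℝ) : ℂ) / (hb : ℂ)) * c (Sum.elim q p)) = 0)
    (q v : Fin n → ℝ) : c (Sum.elim q v) = 0 := by
  have hbne : (hb : ℂ) ≠ 0 := by exact_mod_cast hhb.ne'
  set G : EuclideanSpace ℝ (Fin n) → ℂ := fun w => c (Sum.elim q w) with hGdef
  have mp := EuclideanSpace.volume_preserving_symm_measurableEquiv_toLp (Fin n)
  have emb := (MeasurableEquiv.toLp 2 (Fin n → ℝ)).symm.measurableEmbedding
  have hGcont : Continuous G :=
    (c.continuous.comp (continuous_elim q)).comp (PiLp.continuous_ofLp 2 fun _ : Fin n => ℝ)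
  have hpi : Integrable fun p : Fin n → ℝ => c (Sum.elim q p) := by
    have := integrable_phase_mul c hb q 0
    simpa [dotProduct] using this
  have hGint : Integrable G := (mp.integrable_comp_emb emb).mpr hpi
  have hF : 𝓕 G = fun _ => (0 : ℂ) := by
    funext w
    rw [Real.fourier_eq']
    set u : Fin n → ℝ := (-(2 * Real.pi * hb)) • ((MeasurableEquiv.toLp 2 (Fin n → ℝ)).symm w)
      with hu
    have key := hker q u
    have hstep : (∫ v : EuclideanSpace ℝ (Fin n),
        Complex.exp ((↑(-2 * Real.pi * ⟪v, w⟫) * Complex.I)) • G v)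
        = ∫ p : Fin n → ℝ,
          Complex.exp (Complex.I * ((p ⬝ᵥ u : ℝ) : ℂ) / (hb : ℂ)) * c (Sum.elim q p) := by
      rw [← mp.integral_comp emb (fun p : Fin n → ℝ =>
        Complex.exp (Complex.I * ((p ⬝ᵥ u : ℝ) : ℂ) / (hb : ℂ)) * c (Sum.elim q p))]
      refine integral_congr_ae (ae_of_all _ fun v => ?_)
      dsimp only
      have hdot : ((MeasurableEquiv.toLp 2 (Fin n → ℝ)).symm v) ⬝ᵥ u
          = -(2 * Real.pi * hb) * ⟪v, w⟫ := by
        rw [hu, dotProduct_smul]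
        congr 1
        simp [dotProduct, PiLp.inner_apply, mul_comm]
      rw [hdot]
      have hexp : Complex.I * ((-(2 * Real.pi * hb) * ⟪v, w⟫ : ℝ) : ℂ) / (hb : ℂ)
          = (↑(-2 * Real.pi * ⟪v, w⟫) * Complex.I) := by
        push_cast
        field_simp
      rw [hexp, smul_eq_mul]
      rfl
    rw [hstep, key]
  have hFint : Integrable (𝓕 G) := by rw [hF]; exact integrable_zero _ _ _
  have hinv := hGint.fourierInv_fourier_eq hFint
    (hGcont.continuousAt (x := (WithLp.toLp 2 v)))
  calc c (Sum.elim q v) = G (WithLp.toLp 2 v) := rfl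
  _ = 𝓕⁻ (𝓕 G) (WithLp.toLp 2 v) := hinv.symm
  _ = 0 := by
      rw [hF, Real.fourierInv_eq]
      simp

end WeylAux


end WeylAuxSection

open WeylAux SchwartzMap

/-- The Weyl correspondence is one-to-one on Schwartz symbols. -/
theorem weyl_injective (hbar : ℝ) (hhbar : 0 < hbar) (n : ℕ)
    (a b : SchwartzMap ((Fin n ⊕ Fin n) → ℝ) ℂ)
    (h : ∀ ψ : SchwartzMap (Fin n → ℝ) ℂ, ∀ x : Fin n → ℝ,
      weyl hbar n (⇑a) (⇑ψ) x = weyl hbar n (⇑b) (⇑ψ) x) :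
    a = b := by
  set c := a - b with hc
  have h0 : ∀ ψ : SchwartzMap (Fin n → ℝ) ℂ, ∀ x,
      (∫ y, weylKernel hbar n (⇑c) x y * ψ y) = 0 := by
    intro ψ x
    have h1 := h ψ x
    unfold weyl at h1
    have h2 : (∫ y, weylKernel hbar n (⇑c) x y * ψ y)
        = (∫ y, weylKernel hbar n (⇑a) x y * ψ y)
          - ∫ y, weylKernel hbar n (⇑b) x y * ψ y := by
      rw [← integral_sub (kernel_mul_integrable hbar a ψ x) (kernel_mul_integrable hbar b ψ x)]
      refine integral_congr_ae (ae_of_all _ fun y => ?_)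
      dsimp only
      rw [hc, weylKernel_sub]
      ring
    rw [h2, h1, sub_self]
  have hker0 := kernel_eq_zero hbar c h0
  have hker : ∀ q u : Fin n → ℝ, (∫ p : Fin n → ℝ,
      Complex.exp (Complex.I * ((p ⬝ᵥ u : ℝ) : ℂ) / (hbar : ℂ)) * c (Sum.elim q p)) = 0 := by
    intro q u
    have hk := hker0 (q + (2 : ℝ)⁻¹ • u) (q - (2 : ℝ)⁻¹ • u)
    unfold weylKernel at hk
    have hxy1 : (2 : ℝ)⁻¹ • ((q + (2 : ℝ)⁻¹ • u) + (q - (2 : ℝ)⁻¹ • u)) = q := by module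
    have hxy2 : (q + (2 : ℝ)⁻¹ • u) - (q - (2 : ℝ)⁻¹ • u) = u := by module
    rw [hxy1, hxy2] at hk
    have hpos : (0 : ℝ) < 2 * Real.pi * hbar := by positivity
    have hconst : (((2 * Real.pi * hbar)⁻¹ ^ n : ℝ) : ℂ) ≠ 0 := by
      exact_mod_cast pow_ne_zero n (inv_ne_zero hpos.ne')
    exact (mul_eq_zero.mp hk).resolve_left hconst
  have hz : ∀ z, c z = 0 := by
    intro z
    have hv := integral_phase_eq_zero hbar hhbar c hker (z ∘ Sum.inl) (z ∘ Sum.inr)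
    have hzz : Sum.elim (z ∘ Sum.inl) (z ∘ Sum.inr) = z := by
      funext i; cases i <;> rfl
    rwa [hzz] at hv
  ext z
  have hz' := hz z
  rw [hc] at hz'
  simp only [SchwartzMap.sub_apply, sub_eq_zero] at hz'
  exact hz'


end
end

section
/- Let G be a real symmetric positive definite 2n×2n matrix that is symplectic. Then the positive definite square root G^{1/2} of G is also symplectic (and symmetric positive definite). -/
open MeasureTheory Matrix

noncomputable section

open scoped ComplexOrder in
/-- The square root of a positive semidefinite matrix (removed from Mathlib; old definition). -/
noncomputable def Matrix.PosSemidef.sqrt {n 𝕜 : Type*} [Fintype n] [RCLike 𝕜] [DecidableEq n]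
    {A : Matrix n n 𝕜} (hA : A.PosSemidef) : Matrix n n 𝕜 :=
  hA.1.eigenvectorUnitary.1 * diagonal ((↑) ∘ (√·) ∘ hA.1.eigenvalues) *
    (star hA.1.eigenvectorUnitary : Matrix n n 𝕜)

open scoped ComplexOrder MatrixOrder in
theorem Matrix.PosSemidef.sqrt_eq_cfcSqrt {n 𝕜 : Type*} [Fintype n] [RCLike 𝕜] [DecidableEq n]
    {A : Matrix n n 𝕜} (hA : A.PosSemidef) : hA.sqrt = CFC.sqrt A := by
  rw [CFC.sqrt_eq_cfc, cfc_nnreal_eq_real _ A, hA.1.cfc_eq]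
  simp [IsHermitian.cfc, Matrix.PosSemidef.sqrt, Function.comp_def, max_eq_left,
    hA.eigenvalues_nonneg]

open scoped ComplexOrder MatrixOrder in
theorem Matrix.PosSemidef.posSemidef_sqrt {n 𝕜 : Type*} [Fintype n] [RCLike 𝕜] [DecidableEq n]
    {A : Matrix n n 𝕜} (hA : A.PosSemidef) : hA.sqrt.PosSemidef := by
  rw [hA.sqrt_eq_cfcSqrt]
  exact (CFC.sqrt_nonneg A).posSemidef

open scoped ComplexOrder MatrixOrder in
theorem Matrix.PosSemidef.sqrt_mul_self {n 𝕜 : Type*} [Fintype n] [RCLike 𝕜] [DecidableEq n]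
    {A : Matrix n n 𝕜} (hA : A.PosSemidef) : hA.sqrt * hA.sqrt = A := by
  rw [hA.sqrt_eq_cfcSqrt]
  exact CFC.sqrt_mul_sqrt_self A hA.nonneg

open scoped ComplexOrder MatrixOrder in
theorem Matrix.PosSemidef.eq_of_sq_eq_sq {n 𝕜 : Type*} [Fintype n] [RCLike 𝕜] [DecidableEq n]
    {A B : Matrix n n 𝕜} (hA : A.PosSemidef) (hB : B.PosSemidef) (hAB : A ^ 2 = B ^ 2) :
    A = B := by
  rw [← CFC.sqrt_sq A hA.nonneg, ← CFC.sqrt_sq B hB.nonneg, hAB]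

/-- The positive definite square root of a symmetric positive definite
symplectic matrix is symplectic (and symmetric positive definite). -/
theorem posDef_sqrt_symplectic (n : ℕ)
    (G : Matrix (Fin n ⊕ Fin n) (Fin n ⊕ Fin n) ℝ) (hGs : G.IsSymm) (hG : G.PosDef)
    (hsymp : Gᵀ * stdJ n * G = stdJ n) :
    (hG.posSemidef.sqrt)ᵀ * stdJ n * hG.posSemidef.sqrt = stdJ n ∧
      (hG.posSemidef.sqrt).PosDef := by
  set J := stdJ n with hJdef
  set R := hG.posSemidef.sqrt with hRdef
  have hRps : R.PosSemidef := hG.posSemidef.posSemidef_sqrt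
  have hRR : R * R = G := hG.posSemidef.sqrt_mul_self
  have hRT : Rᵀ = R := by
    have := hRps.isHermitian
    simpa [Matrix.IsHermitian, Matrix.conjTranspose_eq_transpose_of_trivial] using this
  -- PosDef of R
  have hRpd : R.PosDef := by
    exact hRps.posDef_iff_isUnit.mpr (isUnit_of_mul_isUnit_left (hRR ▸ hG.isUnit))
  have hJJ : J * J = -1 := by
    rw [hJdef]
    show Matrix.fromBlocks 0 1 (-1) 0 * Matrix.fromBlocks 0 1 (-1) 0 = -1
    rw [Matrix.fromBlocks_multiply]
    ext i j
    cases i <;> cases j <;>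
      simp [Matrix.fromBlocks, Matrix.one_apply, Matrix.neg_apply, eq_comm]
  have hJT : Jᵀ = -J := by
    simp [hJdef, stdJ, Matrix.fromBlocks_transpose, Matrix.fromBlocks_neg]
  have hGT : Gᵀ = G := hGs
  rw [hGT] at hsymp
  -- S := Jᵀ * R * J is posSemidef
  have hSps : (Jᵀ * R * J).PosSemidef := by
    have := hRps.conjTranspose_mul_mul_same J
    simpa using this
  have hRinv : R⁻¹.PosSemidef := hRps.inv
  have hsq : (Jᵀ * R * J) ^ 2 = (R⁻¹) ^ 2 := by
    have h1 : (Jᵀ * R * J) ^ 2 = Jᵀ * G * J := by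
      rw [pow_two, hJT]
      have e : -J * R * J * (-J * R * J) = J * R * (J * J) * R * J := by
        noncomm_ring
      rw [e, hJJ, ← hRR]
      noncomm_ring
    have h2 : (R⁻¹) ^ 2 = G⁻¹ := by
      rw [pow_two, ← Matrix.mul_inv_rev, hRR]
    have hGinv : Jᵀ * G * J = G⁻¹ := by
      apply Matrix.inv_eq_left_inv ?_ |>.symm
      rw [hJT]
      have e : -J * G * J * G = -(J * (G * J * G)) := by noncomm_ring
      rw [e, hsymp, hJJ, neg_neg]
    rw [h1, h2, hGinv]
  have hS : Jᵀ * R * J = R⁻¹ := hSps.eq_of_sq_eq_sq hRinv hsq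
  have hRunit : IsUnit R.det := hRpd.isUnit.map Matrix.detMonoidHom
  have hRRinv : R * R⁻¹ = 1 := Matrix.mul_nonsing_inv R hRunit
  have key : R * (Jᵀ * R * J) = 1 := by rw [hS, hRRinv]
  have key2 : R * Jᵀ * R * (J * J) = J := by
    have e : R * Jᵀ * R * (J * J) = R * (Jᵀ * R * J) * J := by noncomm_ring
    rw [e, key, one_mul]
  rw [hJJ, hJT] at key2
  have hfin : R * J * R = J := by
    have e : R * -J * R * -1 = R * J * R := by noncomm_ring
    rw [e] at key2; exact key2
  exact ⟨by rw [hRT]; exact hfin, hRpd⟩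

end
end
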